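/- arXiv:0803.0134 — 2 statements merged into one kernel-verified Lean document; each statement's English description precedes it below -/
import Mathlib

section
/- Let G be a connected graph with minimum degree at least 2 that is not an even cycle and in which no edge connects two vertices of degree at least 3, and let G' be obtained from G by subdividing one edge once. If G is an odd cycle then ν₂(G') = ν₂(G) + 2; otherwise ν₂(G') = ν₂(G) + 1. -/
structure Multigraph where
  V : Type
  E : Type
  fintypeV : Fintype V
  decEqV : DecidableEq V
  fintypeE : Fintype E
  decEqE : DecidableEq E
  ends : E → Sym2 V

attribute [instance] Multigraph.fintypeV Multigraph.decEqV Multigraph.fintypeE Multigraph.decEqE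

namespace Multigraph

/-- `e` is a loop if both of its endpoints coincide. -/
def IsLoop (G : Multigraph) (e : G.E) : Prop := (G.ends e).IsDiag

/-- A loopless multigraph. -/
def Loopless (G : Multigraph) : Prop := ∀ e, ¬ G.IsLoop e

/-- Degree of a vertex: loops count twice. -/
def deg (G : Multigraph) (v : G.V) : ℕ :=
  ∑ e : G.E, (if G.ends e = Sym2.diag v then 2 else if v ∈ G.ends e then 1 else 0)

/-- Adjacency via some edge. -/
def Adj (G : Multigraph) (u v : G.V) : Prop := ∃ e, G.ends e = s(u, v)

/-- Connectivity. -/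
def Connected (G : Multigraph) : Prop := ∀ u v : G.V, Relation.ReflTransGen G.Adj u v

/-- A matching: a set of non-loop edges no two of which share an endpoint. -/
def IsMatching (G : Multigraph) (M : Finset G.E) : Prop :=
  (∀ e ∈ M, ¬ G.IsLoop e) ∧
  ∀ e ∈ M, ∀ f ∈ M, e ≠ f → ∀ v : G.V, v ∈ G.ends e → v ∉ G.ends f

/-- A maximum matching. -/
def IsMaximumMatching (G : Multigraph) (M : Finset G.E) : Prop :=
  G.IsMatching M ∧ ∀ M' : Finset G.E, G.IsMatching M' → M'.card ≤ M.card

/-- `v` is saturated by `M`. -/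
def Saturated (G : Multigraph) (M : Finset G.E) (v : G.V) : Prop :=
  ∃ e ∈ M, v ∈ G.ends e

/-- Size of a maximum matching. -/
noncomputable def nu1 (G : Multigraph) : ℕ :=
  sSup {m | ∃ M : Finset G.E, G.IsMatching M ∧ M.card = m}

/-- Max number of edges coverable by two disjoint matchings. -/
noncomputable def nu2 (G : Multigraph) : ℕ :=
  sSup {m | ∃ H H' : Finset G.E, G.IsMatching H ∧ G.IsMatching H' ∧
    Disjoint H H' ∧ H.card + H'.card = m}

/-- Max number of edges coverable by three pairwise disjoint matchings. -/
noncomputable def nu3 (G : Multigraph) : ℕ :=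
  sSup {m | ∃ H₁ H₂ H₃ : Finset G.E, G.IsMatching H₁ ∧ G.IsMatching H₂ ∧ G.IsMatching H₃ ∧
    Disjoint H₁ H₂ ∧ Disjoint H₁ H₃ ∧ Disjoint H₂ H₃ ∧ H₁.card + H₂.card + H₃.card = m}

/-- Subdividing the edge `e`, with endpoints `u`, `v`, once: replace it by a path `u - w - v`
through a new vertex `w`. -/
def subdivideOnce (G : Multigraph) (e : G.E) (u v : G.V) : Multigraph where
  V := G.V ⊕ Unit
  E := {f : G.E // f ≠ e} ⊕ Bool
  fintypeV := inferInstance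
  decEqV := inferInstance
  fintypeE := inferInstance
  decEqE := inferInstance
  ends := fun f =>
    match f with
    | Sum.inl ⟨f, _⟩ => (G.ends f).map Sum.inl
    | Sum.inr true => s(Sum.inl u, Sum.inr ())
    | Sum.inr false => s(Sum.inl v, Sum.inr ())

/-- Subdividing every edge `e` exactly `k e` times, where `fst`/`snd` pick out the endpoints
of every edge. The edge `e` is replaced by the path
`fst e, (e,0), (e,1), …, (e, k e - 1), snd e` of length `k e + 1`. -/
def subdivide (G : Multigraph) (fst snd : G.E → G.V) (k : G.E → ℕ) : Multigraph where
  V := G.V ⊕ (Σ e : G.E, Fin (k e))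
  E := Σ e : G.E, Fin (k e + 1)
  fintypeV := inferInstance
  decEqV := inferInstance
  fintypeE := inferInstance
  decEqE := inferInstance
  ends := fun f =>
    s( if h : f.2.val = 0 then Sum.inl (fst f.1)
       else Sum.inr ⟨f.1, ⟨f.2.val - 1, by omega⟩⟩,
       if h : f.2.val = k f.1 then Sum.inl (snd f.1)
       else Sum.inr ⟨f.1, ⟨f.2.val, by have := f.2.isLt; omega⟩⟩ )


variable {G : Multigraph}

lemma sym2_exists (z : Sym2 G.V) : ∃ a b, z = s(a, b) :=
  @Sym2.ind G.V (fun z => ∃ a b, z = s(a, b)) (fun a b => ⟨a, b, rfl⟩) z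

lemma exists_pair_of_not_isLoop {f : G.E} (h : ¬ G.IsLoop f) :
    ∃ a b : G.V, a ≠ b ∧ G.ends f = s(a, b) := by
  obtain ⟨a, b, hab⟩ := sym2_exists (G.ends f)
  refine ⟨a, b, fun heq => h ?_, hab⟩
  rw [IsLoop, hab, Sym2.mk_isDiag_iff]; exact heq

/-- Number of edges of `F` incident to `v`. -/
def degIn (G : Multigraph) (F : Finset G.E) (v : G.V) : ℕ :=
  (F.filter (fun f => v ∈ G.ends f)).card

lemma degIn_mono {F F' : Finset G.E} (h : F ⊆ F') (v : G.V) : G.degIn F v ≤ G.degIn F' v :=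
  Finset.card_le_card (Finset.filter_subset_filter _ h)

lemma degIn_pos_iff {F : Finset G.E} {v : G.V} :
    0 < G.degIn F v ↔ ∃ f ∈ F, v ∈ G.ends f := by
  rw [degIn, Finset.card_pos]
  constructor
  · rintro ⟨f, hf⟩; rw [Finset.mem_filter] at hf; exact ⟨f, hf.1, hf.2⟩
  · rintro ⟨f, hf, hv⟩; exact ⟨f, Finset.mem_filter.mpr ⟨hf, hv⟩⟩

lemma degIn_eq_zero_iff {F : Finset G.E} {v : G.V} :
    G.degIn F v = 0 ↔ ∀ f ∈ F, v ∉ G.ends f := by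
  constructor
  · intro h0 f hf hv
    have := degIn_pos_iff.mpr ⟨f, hf, hv⟩
    omega
  · intro h
    by_contra h0
    obtain ⟨f, hf, hv⟩ := degIn_pos_iff.mp (Nat.pos_of_ne_zero h0)
    exact h f hf hv

lemma endpoints_card {f : G.E} {a b : G.V} (hab : a ≠ b) (h : G.ends f = s(a, b)) :
    (Finset.univ.filter (fun v => v ∈ G.ends f)).card = 2 := by
  have : Finset.univ.filter (fun v => v ∈ G.ends f) = {a, b} := by
    ext x
    simp [h, Sym2.mem_iff]
  rw [this, Finset.card_insert_of_notMem (by simpa using hab), Finset.card_singleton]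

lemma sum_degIn {F : Finset G.E} (hl : ∀ f ∈ F, ¬ G.IsLoop f) :
    ∑ v, G.degIn F v = 2 * F.card := by
  have h1 : ∀ v, G.degIn F v = ∑ f ∈ F, if v ∈ G.ends f then 1 else 0 := by
    intro v; rw [degIn, Finset.card_filter]
  simp only [h1]
  rw [Finset.sum_comm]
  rw [Finset.sum_congr rfl (fun f hf => ?_), Finset.sum_const, smul_eq_mul, mul_comm]
  obtain ⟨a, b, hab, hends⟩ := exists_pair_of_not_isLoop (hl f hf)
  rw [← Finset.card_filter, endpoints_card hab hends]

lemma IsMatching.degIn_le_one {M : Finset G.E} (hM : G.IsMatching M) (v : G.V) :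
    G.degIn M v ≤ 1 := by
  rw [degIn, Finset.card_le_one]
  intro f hf g hg
  rw [Finset.mem_filter] at hf hg
  by_contra hne
  exact hM.2 f hf.1 g hg.1 hne v hf.2 hg.2

lemma isMatching_empty : G.IsMatching ∅ := ⟨fun e he => absurd he (Finset.notMem_empty e), fun e he => absurd he (Finset.notMem_empty e)⟩

lemma IsMatching.insert {M : Finset G.E} {g : G.E} (hM : G.IsMatching M) (hg : ¬ G.IsLoop g)
    (hfree : ∀ w ∈ G.ends g, ∀ f ∈ M, w ∉ G.ends f) :
    G.IsMatching (insert g M) := by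
  constructor
  · intro f hf
    rcases Finset.mem_insert.mp hf with rfl | hf
    · exact hg
    · exact hM.1 f hf
  · intro f hf k hk hne v hvf hvk
    rcases Finset.mem_insert.mp hf with h1 | h1
    · rcases Finset.mem_insert.mp hk with h2 | h2
      · exact hne (h1.trans h2.symm)
      · subst h1; exact hfree v hvf k h2 hvk
    · rcases Finset.mem_insert.mp hk with h2 | h2
      · subst h2; exact hfree v hvk f h1 hvf
      · exact hM.2 f h1 k h2 hne v hvf hvk

lemma IsMatching.union {M N : Finset G.E} (hM : G.IsMatching M) (hN : G.IsMatching N)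
    (hsep : ∀ f ∈ M, ∀ g ∈ N, ∀ v : G.V, v ∈ G.ends f → v ∉ G.ends g) :
    G.IsMatching (M ∪ N) := by
  constructor
  · intro f hf
    rcases Finset.mem_union.mp hf with hf | hf
    · exact hM.1 f hf
    · exact hN.1 f hf
  · intro f hf k hk hne v hvf hvk
    rcases Finset.mem_union.mp hf with hf | hf <;> rcases Finset.mem_union.mp hk with hk | hk
    · exact hM.2 f hf k hk hne v hvf hvk
    · exact hsep f hf k hk v hvf hvk
    · exact hsep k hk f hf v hvk hvf
    · exact hN.2 f hf k hk hne v hvf hvk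

/-! ### nu2 API -/

lemma nu2_set_nonempty :
    {m | ∃ H H' : Finset G.E, G.IsMatching H ∧ G.IsMatching H' ∧
      Disjoint H H' ∧ H.card + H'.card = m}.Nonempty :=
  ⟨0, ∅, ∅, isMatching_empty, isMatching_empty, Finset.disjoint_empty_left ∅, rfl⟩

lemma nu2_set_bddAbove :
    BddAbove {m | ∃ H H' : Finset G.E, G.IsMatching H ∧ G.IsMatching H' ∧
      Disjoint H H' ∧ H.card + H'.card = m} := by
  refine ⟨Fintype.card G.E, fun m hm => ?_⟩
  obtain ⟨H, H', _, _, hd, rfl⟩ := hm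
  rw [← Finset.card_union_of_disjoint hd]
  exact le_trans (Finset.card_le_univ _) (le_of_eq (Finset.card_univ))

lemma le_nu2 {H H' : Finset G.E} (hH : G.IsMatching H) (hH' : G.IsMatching H')
    (hd : Disjoint H H') : H.card + H'.card ≤ G.nu2 :=
  le_csSup nu2_set_bddAbove ⟨H, H', hH, hH', hd, rfl⟩

lemma exists_nu2 : ∃ H H' : Finset G.E, G.IsMatching H ∧ G.IsMatching H' ∧
    Disjoint H H' ∧ H.card + H'.card = G.nu2 :=
  Nat.sSup_mem nu2_set_nonempty nu2_set_bddAbove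

lemma nu2_le {c : ℕ} (h : ∀ H H' : Finset G.E, G.IsMatching H → G.IsMatching H' →
    Disjoint H H' → H.card + H'.card ≤ c) : G.nu2 ≤ c := by
  refine csSup_le nu2_set_nonempty ?_
  rintro m ⟨H, H', hH, hH', hd, rfl⟩
  exact h H H' hH hH' hd

lemma nu2_le_card : G.nu2 ≤ Fintype.card G.E := by
  refine nu2_le (fun H H' hH hH' hd => ?_)
  rw [← Finset.card_union_of_disjoint hd]
  exact le_trans (Finset.card_le_univ _) (le_of_eq (Finset.card_univ))

/-! ### Good edge sets -/

/-- Every vertex touching `K` has exactly two `K`-edges. -/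
def TwoReg (G : Multigraph) (K : Finset G.E) : Prop :=
  ∀ v, 0 < G.degIn K v → G.degIn K v = 2

/-- `F` is the union of two disjoint matchings, characterized combinatorially. -/
def Good (G : Multigraph) (F : Finset G.E) : Prop :=
  (∀ v, G.degIn F v ≤ 2) ∧ ∀ K ⊆ F, G.TwoReg K → Even K.card

lemma degIn_union_le (A B : Finset G.E) (v : G.V) :
    G.degIn (A ∪ B) v ≤ G.degIn A v + G.degIn B v := by
  rw [degIn, degIn, degIn, Finset.filter_union]
  exact Finset.card_union_le _ _

lemma good_of_matchings {H H' : Finset G.E} (hH : G.IsMatching H) (hH' : G.IsMatching H')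
    (hd : Disjoint H H') : G.Good (H ∪ H') := by
  constructor
  · intro v
    exact le_trans (degIn_union_le H H' v)
      (Nat.add_le_add (hH.degIn_le_one v) (hH'.degIn_le_one v))
  · intro K hK hreg
    have hsplit : K = (K ∩ H) ∪ (K ∩ H') := by
      rw [← Finset.inter_union_distrib_left]
      exact (Finset.inter_eq_left.mpr hK).symm
    have hdisj : Disjoint (K ∩ H) (K ∩ H') :=
      hd.mono Finset.inter_subset_right Finset.inter_subset_right
    have hcard : K.card = (K ∩ H).card + (K ∩ H').card := by
      rw [← Finset.card_union_of_disjoint hdisj, ← hsplit]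
    -- each vertex of K has exactly one K∩H edge and one K∩H' edge
    have key : ∀ (M : Finset G.E), G.IsMatching M → Disjoint H H' →
        True := fun _ _ _ => trivial
    have hone : ∀ v, 0 < G.degIn K v → G.degIn (K ∩ H) v = 1 ∧ G.degIn (K ∩ H') v = 1 := by
      intro v hv
      have h2 : G.degIn K v = 2 := hreg v hv
      have hle : G.degIn K v ≤ G.degIn (K ∩ H) v + G.degIn (K ∩ H') v := by
        conv_lhs => rw [hsplit]
        exact degIn_union_le _ _ v
      have hH1 : G.degIn (K ∩ H) v ≤ 1 :=
        le_trans (degIn_mono Finset.inter_subset_right v) (hH.degIn_le_one v)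
      have hH'1 : G.degIn (K ∩ H') v ≤ 1 :=
        le_trans (degIn_mono Finset.inter_subset_right v) (hH'.degIn_le_one v)
      omega
    have hcount : ∀ (M : Finset G.E), G.IsMatching M →
        (∀ v, 0 < G.degIn K v → G.degIn (K ∩ M) v = 1) →
        2 * (K ∩ M).card = (Finset.univ.filter (fun v => 0 < G.degIn K v)).card := by
      intro M hMm hones
      have hpt : ∀ v, G.degIn (K ∩ M) v = if 0 < G.degIn K v then 1 else 0 := by
        intro v
        by_cases hv : 0 < G.degIn K v
        · simp [hones v hv, hv]
        · have h00 : G.degIn K v = 0 := by omega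
          have h0 : G.degIn (K ∩ M) v = 0 := by
            have := degIn_mono (Finset.inter_subset_left : K ∩ M ⊆ K) v
            omega
          simp [h0, hv]
      have hs := sum_degIn (G := G) (F := K ∩ M) (fun f hf => hMm.1 f (Finset.mem_inter.mp hf).2)
      rw [← hs, Finset.sum_congr rfl (fun v _ => hpt v), ← Finset.card_filter]
    have e1 := hcount H hH (fun v hv => (hone v hv).1)
    have e2 := hcount H' hH' (fun v hv => (hone v hv).2)
    refine ⟨(K ∩ H).card, ?_⟩
    omega


/-! ### Orbit machinery -/

lemma sym2_eq_of_mem_mem {z : Sym2 G.V} {a b : G.V} (ha : a ∈ z) (hb : b ∈ z) (hab : a ≠ b) :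
    z = s(a, b) := by
  obtain ⟨c, d, rfl⟩ := sym2_exists z
  rcases Sym2.mem_iff.mp ha with rfl | rfl <;> rcases Sym2.mem_iff.mp hb with h | h
  · exact absurd h.symm hab
  · subst h; rfl
  · subst h; exact Sym2.eq_swap
  · exact absurd h.symm hab

lemma other'_eq {z : Sym2 G.V} {a b : G.V} (hab : a ≠ b) (hz : z = s(a, b)) (h : b ∈ z) :
    Sym2.Mem.other' h = a := by
  have hsp : s(b, Sym2.Mem.other' h) = s(a, b) := (Sym2.other_spec' h).trans hz
  rcases Sym2.eq_iff.mp hsp with ⟨h1, _⟩ | ⟨_, h2⟩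
  · exact absurd h1.symm hab
  · exact h2

lemma other'_ne {z : Sym2 G.V} (hz : ¬ z.IsDiag) {a : G.V} (h : a ∈ z) :
    Sym2.Mem.other' h ≠ a := by
  intro he
  apply hz
  rw [← Sym2.other_spec' h, he]
  exact Sym2.mk_isDiag_iff.mpr rfl

end Multigraph

/-- Orbit state: an edge of `K` together with one of its endpoints (interpreted as the
vertex we just arrived at). -/
def Multigraph.OSt (G : Multigraph) (K : Finset G.E) : Type :=
  {p : G.E × G.V // p.1 ∈ K ∧ p.2 ∈ G.ends p.1}

namespace Multigraph

variable {G : Multigraph} {K : Finset G.E}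

instance : Fintype (G.OSt K) := by unfold OSt; infer_instance
instance : DecidableEq (G.OSt K) := by unfold OSt; infer_instance

def OSt.edge (s : G.OSt K) : G.E := s.1.1
def OSt.vtx (s : G.OSt K) : G.V := s.1.2
lemma OSt.edge_mem (s : G.OSt K) : s.edge ∈ K := s.2.1
lemma OSt.vtx_mem (s : G.OSt K) : s.vtx ∈ G.ends s.edge := s.2.2
lemma OSt.ext {s t : G.OSt K} (h1 : s.edge = t.edge) (h2 : s.vtx = t.vtx) : s = t := by
  cases s; cases t
  simp only [OSt.edge, OSt.vtx] at h1 h2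
  exact Subtype.ext (Prod.ext h1 h2)

/-- The defining property of the successor state. -/
def StepProp (s t : G.OSt K) : Prop :=
  t.edge ≠ s.edge ∧ G.ends t.edge = s(s.vtx, t.vtx)

section StepLemmas

lemma card_edges_at (hK : ∀ v, 0 < G.degIn K v → G.degIn K v = 2) {y : G.V} {f : G.E} (hf : f ∈ K) (hy : y ∈ G.ends f) :
    (K.filter (fun g => y ∈ G.ends g)).card = 2 :=
  hK y (degIn_pos_iff.mpr ⟨f, hf, hy⟩)

lemma step_exists (hK : ∀ v, 0 < G.degIn K v → G.degIn K v = 2) (s : G.OSt K) : ∃ t : G.OSt K, StepProp s t := by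
  have h2 := card_edges_at hK s.edge_mem s.vtx_mem
  have h1 : ((K.filter (fun g => s.vtx ∈ G.ends g)).erase s.edge).card = 1 := by
    rw [Finset.card_erase_of_mem (Finset.mem_filter.mpr ⟨s.edge_mem, s.vtx_mem⟩), h2]
  obtain ⟨g, hg⟩ := Finset.card_eq_one.mp h1
  have hgmem : g ∈ (K.filter (fun g => s.vtx ∈ G.ends g)).erase s.edge :=
    hg ▸ Finset.mem_singleton_self g
  have hgne : g ≠ s.edge := (Finset.mem_erase.mp hgmem).1
  have hgK : g ∈ K := (Finset.mem_filter.mp (Finset.mem_erase.mp hgmem).2).1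
  have hyg : s.vtx ∈ G.ends g := (Finset.mem_filter.mp (Finset.mem_erase.mp hgmem).2).2
  exact ⟨⟨⟨g, Sym2.Mem.other' hyg⟩, hgK, Sym2.other_mem' hyg⟩, hgne, (Sym2.other_spec' hyg).symm⟩

lemma step_unique (hK : ∀ v, 0 < G.degIn K v → G.degIn K v = 2) {s t t' : G.OSt K} (h : StepProp s t) (h' : StepProp s t') : t = t' := by
  have hedge : t.edge = t'.edge := by
    have h2 := card_edges_at hK s.edge_mem s.vtx_mem
    have h1 : ((K.filter (fun g => s.vtx ∈ G.ends g)).erase s.edge).card = 1 := by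
      rw [Finset.card_erase_of_mem (Finset.mem_filter.mpr ⟨s.edge_mem, s.vtx_mem⟩), h2]
    obtain ⟨g, hg⟩ := Finset.card_eq_one.mp h1
    have m1 : t.edge ∈ (K.filter (fun g => s.vtx ∈ G.ends g)).erase s.edge := by
      refine Finset.mem_erase.mpr ⟨h.1, Finset.mem_filter.mpr ⟨t.edge_mem, ?_⟩⟩
      rw [h.2]; exact Sym2.mem_mk_left _ _
    have m2 : t'.edge ∈ (K.filter (fun g => s.vtx ∈ G.ends g)).erase s.edge := by
      refine Finset.mem_erase.mpr ⟨h'.1, Finset.mem_filter.mpr ⟨t'.edge_mem, ?_⟩⟩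
      rw [h'.2]; exact Sym2.mem_mk_left _ _
    rw [hg, Finset.mem_singleton] at m1 m2
    rw [m1, m2]
  refine OSt.ext hedge ?_
  have := h'.2
  rw [← hedge] at this
  rw [h.2] at this
  exact (Sym2.congr_right.mp this)

lemma step_inj (hK : ∀ v, 0 < G.degIn K v → G.degIn K v = 2) {s s' t : G.OSt K} (h : StepProp s t) (h' : StepProp s' t) : s = s' := by
  have hvtx : s.vtx = s'.vtx := by
    have h3 := h.2.symm.trans h'.2
    exact Sym2.congr_left.mp h3
  have hedge : s.edge = s'.edge := by
    have h2 := card_edges_at hK s.edge_mem s.vtx_mem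
    have h1 : ((K.filter (fun g => s.vtx ∈ G.ends g)).erase t.edge).card = 1 := by
      rw [Finset.card_erase_of_mem, h2]
      refine Finset.mem_filter.mpr ⟨t.edge_mem, ?_⟩
      rw [h.2]; exact Sym2.mem_mk_left _ _
    obtain ⟨g, hg⟩ := Finset.card_eq_one.mp h1
    have m1 : s.edge ∈ (K.filter (fun g => s.vtx ∈ G.ends g)).erase t.edge := by
      refine Finset.mem_erase.mpr ⟨fun hc => h.1 hc.symm, Finset.mem_filter.mpr ⟨s.edge_mem, s.vtx_mem⟩⟩
    have m2 : s'.edge ∈ (K.filter (fun g => s.vtx ∈ G.ends g)).erase t.edge := by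
      refine Finset.mem_erase.mpr ⟨fun hc => h'.1 hc.symm, Finset.mem_filter.mpr ⟨s'.edge_mem, ?_⟩⟩
      rw [hvtx]; exact s'.vtx_mem
    rw [hg, Finset.mem_singleton] at m1 m2
    rw [m1, m2]
  exact OSt.ext hedge hvtx

/-- Reversal of a state: same edge, other endpoint. -/
def rev (s : G.OSt K) : G.OSt K :=
  ⟨⟨s.edge, Sym2.Mem.other' s.vtx_mem⟩, s.edge_mem, Sym2.other_mem' s.vtx_mem⟩

@[simp] lemma rev_edge (s : G.OSt K) : (rev s).edge = s.edge := rfl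

lemma rev_vtx (s : G.OSt K) : (rev s).vtx = Sym2.Mem.other' s.vtx_mem := rfl

lemma ends_eq_rev (s : G.OSt K) : G.ends s.edge = s(s.vtx, (rev s).vtx) := by
  rw [rev_vtx]
  exact (Sym2.other_spec' s.vtx_mem).symm

lemma rev_ne (hl : G.Loopless) (s : G.OSt K) : rev s ≠ s := by
  intro h
  have h2 : (rev s).vtx = s.vtx := by rw [h]
  rw [rev_vtx] at h2
  exact other'_ne (hl s.edge) s.vtx_mem h2

lemma step_rev (hl : G.Loopless) {s t : G.OSt K} (h : StepProp s t) :
    StepProp (rev t) (rev s) := by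
  have hne : s.vtx ≠ t.vtx := by
    intro hc
    refine hl t.edge ?_
    show (G.ends t.edge).IsDiag
    rw [h.2, hc]
    exact Sym2.mk_isDiag_iff.mpr rfl
  have hrtv : (rev t).vtx = s.vtx := by
    rw [rev_vtx]
    exact other'_eq hne h.2 t.vtx_mem
  constructor
  · rw [rev_edge, rev_edge]
    exact fun hc => h.1 hc.symm
  · rw [rev_edge, hrtv]
    exact ends_eq_rev s

end StepLemmas


section Orbit

variable {G : Multigraph} {K : Finset G.E}

theorem orbit (hl : G.Loopless)
    (hK : ∀ v, 0 < G.degIn K v → G.degIn K v = 2)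
    {e₀ : G.E} (he₀ : e₀ ∈ K) {u₀ : G.V} (hu₀ : u₀ ∈ G.ends e₀) :
    ∃ (n : ℕ) (f : ZMod n → G.E) (x : ZMod n → G.V), 2 ≤ n ∧
      Function.Injective f ∧ Function.Injective x ∧
      (∀ i, f i ∈ K) ∧ f 0 = e₀ ∧ x 0 = u₀ ∧
      (∀ i, G.ends (f i) = s(x (i - 1), x i)) ∧
      (∀ h ∈ K, ∀ i : ZMod n, x i ∈ G.ends h → ∃ j, f j = h) := by
  classical
  choose step hstep using step_exists (G := G) (K := K) hK
  have stepInj : Function.Injective step := by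
    intro p q hpq
    have hq := hstep q
    rw [← hpq] at hq
    exact step_inj hK (hstep p) hq
  let s₀ : G.OSt K := ⟨⟨e₀, u₀⟩, he₀, hu₀⟩
  let T : ℕ → G.OSt K := fun k => step^[k] s₀
  have Tsucc : ∀ k, T (k + 1) = step (T k) := fun k => Function.iterate_succ_apply' step k s₀
  have Tstep : ∀ k, StepProp (T k) (T (k + 1)) := by
    intro k; rw [Tsucc]; exact hstep (T k)
  have Tadd : ∀ m k, T (m + k) = step^[m] (T k) := fun m k => Function.iterate_add_apply step m k s₀
  have cancel : ∀ a c, T a = T (a + c) → T c = T 0 := by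
    intro a
    induction a with
    | zero => intro c h; simpa using h.symm
    | succ a ih =>
      intro c h
      apply ih c
      apply stepInj
      rw [← Tsucc, ← Tsucc]
      have hh : a + 1 + c = (a + c) + 1 := by omega
      rw [← hh]; exact h
  have hper : ∃ c, 0 < c ∧ T c = T 0 := by
    obtain ⟨a, b, hab, heq⟩ := Fintype.exists_ne_map_eq_of_card_lt
      (fun k : Fin (Fintype.card (G.OSt K) + 1) => T k.val) (by simp)
    rcases Nat.lt_or_ge a.val b.val with h | h
    · refine ⟨b.val - a.val, by omega, cancel a.val _ ?_⟩
      rw [heq]; congr 1; omega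
    · have hba : b.val < a.val := lt_of_le_of_ne h (fun hc => hab (Fin.ext hc.symm))
      refine ⟨a.val - b.val, by omega, cancel b.val _ ?_⟩
      rw [← heq]; congr 1; omega
  set n := Nat.find hper with hn
  have npos : 0 < n := (Nat.find_spec hper).1
  have per : T n = T 0 := (Nat.find_spec hper).2
  have nmin : ∀ k, 0 < k → k < n → T k ≠ T 0 := fun k h1 h2 hc => Nat.find_min hper h2 ⟨h1, hc⟩
  have Tper : ∀ k, T (k + n) = T k := by
    intro k
    rw [Tadd k n, per]
    have : T k = T (k + 0) := by rw [Nat.add_zero]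
    rw [this, Tadd k 0]
  have Tmul : ∀ q k, T (k + q * n) = T k := by
    intro q
    induction q with
    | zero => intro k; simp
    | succ q ih =>
      intro k
      have h : k + (q + 1) * n = (k + q * n) + n := by ring
      rw [h, Tper, ih]
  have Tmod : ∀ k, T (k % n) = T k := by
    intro k
    conv_rhs => rw [← Nat.mod_add_div k n]
    rw [show k % n + n * (k / n) = k % n + (k / n) * n by ring, Tmul]
  have Tcong : ∀ a b, a % n = b % n → T a = T b := by
    intro a b h; rw [← Tmod a, ← Tmod b, h]
  have TinjBelow : ∀ a b, a < n → b < n → T a = T b → a = b := by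
    intro a b ha hb heq
    rcases Nat.lt_trichotomy a b with h | h | h
    · exfalso
      refine nmin (b - a) (by omega) (by omega) ?_
      refine cancel a _ ?_
      rw [show a + (b - a) = b from by omega]; exact heq
    · exact h
    · exfalso
      refine nmin (a - b) (by omega) (by omega) ?_
      refine cancel b _ ?_
      rw [show b + (a - b) = a from by omega]; exact heq.symm
  have n2 : 2 ≤ n := by
    have hne1 : n ≠ 1 := by
      intro h1
      have hp := (Tstep 0).1
      rw [show (0 : ℕ) + 1 = n from by omega, per] at hp
      exact hp rfl
    omega
  haveI : NeZero n := ⟨by omega⟩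
  haveI : Fact (1 < n) := ⟨by omega⟩
  have val_succ : ∀ i : ZMod n, T ((i + 1).val) = T (i.val + 1) := by
    intro i
    apply Tcong
    have h1 := ZMod.val_add i 1
    have h2 := ZMod.val_one n
    rw [h2] at h1
    rw [h1, Nat.mod_mod_of_dvd _ dvd_rfl]
  have hends_nat : ∀ k, G.ends ((T (k + 1)).edge) = s((T k).vtx, (T (k + 1)).vtx) :=
    fun k => (Tstep k).2
  have hends : ∀ i : ZMod n, G.ends ((T i.val).edge) = s((T (i - 1).val).vtx, (T i.val).vtx) := by
    intro i
    have hji : (i - 1) + 1 = i := by ring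
    have h1 : T i.val = T ((i - 1).val + 1) := by
      have h := val_succ (i - 1); rw [hji] at h; exact h
    rw [h1]; exact hends_nat (i - 1).val
  -- injectivity of the edge function
  have injf : Function.Injective (fun i : ZMod n => (T i.val).edge) := by
    intro i j hij
    simp only at hij
    by_cases hxy : (T i.val).vtx = (T j.val).vtx
    · exact ZMod.val_injective n
        (TinjBelow _ _ (ZMod.val_lt i) (ZMod.val_lt j) (OSt.ext hij hxy))
    · exfalso
      have hmi : (T i.val).vtx ∈ G.ends ((T i.val).edge) := (T i.val).vtx_mem
      have hmj : (T j.val).vtx ∈ G.ends ((T i.val).edge) := by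
        rw [hij]; exact (T j.val).vtx_mem
      have hz : G.ends ((T i.val).edge) = s((T j.val).vtx, (T i.val).vtx) :=
        sym2_eq_of_mem_mem hmj hmi (fun hc => hxy hc.symm)
      have hrev : rev (T i.val) = T j.val := by
        refine OSt.ext (by rw [rev_edge]; exact hij) ?_
        rw [rev_vtx]
        exact other'_eq (fun hc => hxy hc.symm) hz (T i.val).vtx_mem
      have rT : ∀ k, step (rev (T (k + 1))) = rev (T k) := by
        intro k
        exact step_unique hK (hstep (rev (T (k + 1)))) (step_rev hl (Tstep k))
      have iterBW : ∀ m k, step^[m] (rev (T (k + m))) = rev (T k) := by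
        intro m
        induction m with
        | zero => intro k; simp
        | succ m ih =>
          intro k
          rw [Function.iterate_succ_apply, show k + (m + 1) = (k + m) + 1 from rfl, rT (k + m)]
          exact ih k
      have key : ∀ m, rev (T (i.val + m)) = T (j.val + m * (n - 1)) := by
        intro m
        have h1 : step^[m] (rev (T (i.val + m))) = T j.val := by rw [iterBW m i.val, hrev]
        have h2 : step^[m] (T (j.val + m * (n - 1))) = T j.val := by
          rw [← Tadd m (j.val + m * (n - 1))]
          apply Tcong
          have h4 : m * (n - 1) + m = m * n := by
            have h5 : n - 1 + 1 = n := Nat.succ_pred_eq_of_pos npos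
            calc m * (n - 1) + m = m * ((n - 1) + 1) := by ring
              _ = m * n := by rw [h5]
          have hmn : m + (j.val + m * (n - 1)) = j.val + m * n := by omega
          rw [hmn, Nat.add_mul_mod_self_right]
        exact (stepInj.iterate m) (h1.trans h2.symm)
      set a := i.val with ha
      set b := j.val with hb
      have han : a < n := ZMod.val_lt i
      have hbn : b < n := ZMod.val_lt j
      set d := (b + n - a) % n with hd
      have lemma1 : ∀ m, (b + m * (n - 1) + m) % n = b % n := by
        intro m
        have h4 : m * (n - 1) + m = m * n := by
          have h5 : n - 1 + 1 = n := Nat.succ_pred_eq_of_pos npos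
          calc m * (n - 1) + m = m * ((n - 1) + 1) := by ring
            _ = m * n := by rw [h5]
        have h3 : b + m * (n - 1) + m = b + m * n := by omega
        rw [h3, Nat.add_mul_mod_self_right]
      have lemma2 : (a + d) % n = b % n := by
        have hdd : d % n = (b + n - a) % n := by rw [hd, Nat.mod_mod_of_dvd _ dvd_rfl]
        rw [Nat.add_mod a d, hdd, ← Nat.add_mod a (b + n - a)]
        rw [show a + (b + n - a) = b + n from by omega, Nat.add_mod_right]
      rcases Nat.even_or_odd d with ⟨m, hm⟩ | ⟨m, hm⟩
      · -- d = m + m : fixed point of rev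
        have hcong : (a + m) % n = (b + m * (n - 1)) % n := by
          have e1 : (a + m + m) % n = (b + m * (n - 1) + m) % n := by
            rw [lemma1 m, show a + m + m = a + d from by omega, lemma2]
          have := Nat.ModEq.add_right_cancel' m e1
          exact this
        have hTeq : T (a + m) = T (b + m * (n - 1)) := Tcong _ _ hcong
        have := key m
        rw [← hTeq] at this
        exact rev_ne hl (T (a + m)) this
      · -- d = 2m + 1 : rev equals a step, impossible (edge changes)
        have hcong : (a + m + 1) % n = (b + m * (n - 1)) % n := by
          have e1 : (a + m + 1 + m) % n = (b + m * (n - 1) + m) % n := by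
            rw [lemma1 m, show a + m + 1 + m = a + d from by omega, lemma2]
          exact Nat.ModEq.add_right_cancel' m e1
        have hTeq : T (a + m + 1) = T (b + m * (n - 1)) := Tcong _ _ hcong
        have hk := key m
        rw [← hTeq] at hk
        have hedge : (rev (T (a + m))).edge = (T (a + m + 1)).edge := by rw [hk]
        rw [rev_edge] at hedge
        exact (Tstep (a + m)).1 hedge.symm
  -- injectivity of the vertex function
  have main : ∀ i j : ZMod n, (T i.val).vtx = (T j.val).vtx →
      (T j.val).edge ≠ (T i.val).edge → j = i + 1 := by
    intro i j hxy hfij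
    have h2 := card_edges_at hK (T i.val).edge_mem (T i.val).vtx_mem
    have h1 : ((K.filter (fun g => (T i.val).vtx ∈ G.ends g)).erase (T i.val).edge).card = 1 := by
      rw [Finset.card_erase_of_mem
        (Finset.mem_filter.mpr ⟨(T i.val).edge_mem, (T i.val).vtx_mem⟩), h2]
    obtain ⟨g, hg⟩ := Finset.card_eq_one.mp h1
    have m1 : (T j.val).edge ∈ (K.filter (fun g => (T i.val).vtx ∈ G.ends g)).erase (T i.val).edge := by
      refine Finset.mem_erase.mpr ⟨hfij, Finset.mem_filter.mpr ⟨(T j.val).edge_mem, ?_⟩⟩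
      rw [hxy]; exact (T j.val).vtx_mem
    have m2 : (T ((i + 1).val)).edge ∈ (K.filter (fun g => (T i.val).vtx ∈ G.ends g)).erase (T i.val).edge := by
      rw [val_succ i]
      refine Finset.mem_erase.mpr ⟨(Tstep i.val).1, Finset.mem_filter.mpr ⟨(T (i.val + 1)).edge_mem, ?_⟩⟩
      rw [(Tstep i.val).2]; exact Sym2.mem_mk_left _ _
    rw [hg, Finset.mem_singleton] at m1 m2
    exact injf (m1.trans m2.symm)
  have injx : Function.Injective (fun i : ZMod n => (T i.val).vtx) := by
    intro i j hxy
    simp only at hxy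
    by_contra hij
    have hfij : (T j.val).edge ≠ (T i.val).edge := by
      intro hc
      exact hij (injf hc).symm
    have hj : j = i + 1 := main i j hxy hfij
    have hi : i = j + 1 := main j i hxy.symm (fun hc => hfij hc.symm)
    have h20 : (2 : ZMod n) = 0 := by
      rw [hj] at hi
      have h5 : i + 2 = i + 0 := by
        rw [add_zero]
        conv_rhs => rw [hi]
        ring
      exact add_left_cancel h5
    have hdvd : n ∣ 2 := by
      have : ((2 : ℕ) : ZMod n) = 0 := by exact_mod_cast h20
      exact (ZMod.natCast_eq_zero_iff 2 n).mp this
    have hn2 : n = 2 := le_antisymm (Nat.le_of_dvd (by omega) hdvd) n2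
    -- n = 2 and j = i + 1 : the edge f (i+1) would be a loop
    have hloop := hends (i + 1)
    rw [show (i + 1) - 1 = i from by ring] at hloop
    have hxx : (T ((i + 1).val)).vtx = (T i.val).vtx := by rw [← hj]; exact hxy.symm
    rw [hxx] at hloop
    exact hl ((T ((i + 1).val)).edge) (by show (G.ends _).IsDiag; rw [hloop]; exact Sym2.mk_isDiag_iff.mpr rfl)
  -- closure
  have closure : ∀ h ∈ K, ∀ i : ZMod n, (T i.val).vtx ∈ G.ends h →
      ∃ j : ZMod n, (T j.val).edge = h := by
    intro h hh i hmem
    have h2 := card_edges_at hK (T i.val).edge_mem (T i.val).vtx_mem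
    have hpair : ({(T i.val).edge, (T ((i + 1).val)).edge} : Finset G.E) =
        K.filter (fun g => (T i.val).vtx ∈ G.ends g) := by
      apply Finset.eq_of_subset_of_card_le
      · intro z hz
        rcases Finset.mem_insert.mp hz with rfl | hz
        · exact Finset.mem_filter.mpr ⟨(T i.val).edge_mem, (T i.val).vtx_mem⟩
        · rw [Finset.mem_singleton] at hz
          subst hz
          rw [val_succ i]
          refine Finset.mem_filter.mpr ⟨(T (i.val + 1)).edge_mem, ?_⟩
          rw [(Tstep i.val).2]; exact Sym2.mem_mk_left _ _
      · rw [h2]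
        have hne : (T i.val).edge ≠ (T ((i + 1).val)).edge := by
          rw [val_succ i]; exact fun hc => (Tstep i.val).1 hc.symm
        rw [Finset.card_insert_of_notMem (by simpa using hne), Finset.card_singleton]
    have : h ∈ ({(T i.val).edge, (T ((i + 1).val)).edge} : Finset G.E) := by
      rw [hpair]; exact Finset.mem_filter.mpr ⟨hh, hmem⟩
    rcases Finset.mem_insert.mp this with rfl | hz
    · exact ⟨i, rfl⟩
    · rw [Finset.mem_singleton] at hz
      exact ⟨i + 1, hz.symm⟩
  refine ⟨n, fun i => (T i.val).edge, fun i => (T i.val).vtx, n2, injf, injx, ?_, ?_, ?_, hends, ?_⟩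
  · exact fun i => (T i.val).edge_mem
  · show (T (0 : ZMod n).val).edge = e₀
    rw [ZMod.val_zero]; rfl
  · show (T (0 : ZMod n).val).vtx = u₀
    rw [ZMod.val_zero]; rfl
  · exact closure

end Orbit


/-! ### Enumeration helpers, chase lemma, Good ↔ matchings -/

section Enum

variable {G : Multigraph}

lemma exists_mem_ends (g : G.E) : ∃ u, u ∈ G.ends g := by
  obtain ⟨a, b, hab⟩ := sym2_exists (G.ends g)
  exact ⟨a, by rw [hab]; exact Sym2.mem_mk_left _ _⟩

variable {n : ℕ} {f : ZMod n → G.E} {x : ZMod n → G.V}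

lemma enum_mem_right (hends : ∀ i, G.ends (f i) = s(x (i - 1), x i)) (i : ZMod n) :
    x i ∈ G.ends (f i) := by
  rw [hends i]; exact Sym2.mem_mk_right _ _

lemma enum_mem_left (hends : ∀ i, G.ends (f i) = s(x (i - 1), x i)) (i : ZMod n) :
    x i ∈ G.ends (f (i + 1)) := by
  rw [hends (i + 1), show i + 1 - 1 = i from by ring]
  exact Sym2.mem_mk_left _ _

lemma enum_vtx_cases (hends : ∀ i, G.ends (f i) = s(x (i - 1), x i)) {v : G.V} {m : ZMod n}
    (h : v ∈ G.ends (f m)) : v = x (m - 1) ∨ v = x m := by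
  rw [hends m] at h; exact Sym2.mem_iff.mp h

lemma enum_mem_pair (injx : Function.Injective x)
    (hends : ∀ i, G.ends (f i) = s(x (i - 1), x i))
    {m i : ZMod n} (h : x i ∈ G.ends (f m)) : m = i ∨ m = i + 1 := by
  rw [hends m] at h
  rcases Sym2.mem_iff.mp h with h | h
  · right
    have h2 := injx h
    rw [h2]; ring
  · left; exact (injx h).symm

lemma enum_share (injx : Function.Injective x)
    (hends : ∀ i, G.ends (f i) = s(x (i - 1), x i))
    {i j : ZMod n} {v : G.V} (hvi : v ∈ G.ends (f i)) (hvj : v ∈ G.ends (f j)) :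
    j = i ∨ j = i + 1 ∨ i = j + 1 := by
  rcases enum_vtx_cases hends hvi with rfl | rfl
  · rcases enum_mem_pair injx hends hvj with h | h
    · right; right; rw [h]; ring
    · left; rw [h]; ring
  · rcases enum_mem_pair injx hends hvj with h | h
    · left; exact h
    · right; left; exact h

lemma enum_ne_succ (injf : Function.Injective f) (n2 : 2 ≤ n) (i : ZMod n) :
    f i ≠ f (i + 1) := by
  haveI : NeZero n := ⟨by omega⟩
  haveI : Fact (1 < n) := ⟨by omega⟩
  intro hc
  have h0 := injf hc
  have h1 : i + 0 = i + 1 := by rw [add_zero]; exact h0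
  have h2 := add_left_cancel h1
  have h3 := congrArg ZMod.val h2
  rw [ZMod.val_zero, ZMod.val_one n] at h3
  omega

/-- All edges of `F` at a cycle vertex lie on the cycle, provided degrees in `F` are ≤ 2. -/
lemma enum_edges_at {F : Finset G.E}
    (hmemF : ∀ i, f i ∈ F) (injf : Function.Injective f) (n2 : 2 ≤ n)
    (hends : ∀ i, G.ends (f i) = s(x (i - 1), x i))
    (i : ZMod n) (hdegi : G.degIn F (x i) ≤ 2) {h : G.E} (hh : h ∈ F) (hmemh : x i ∈ G.ends h) :
    h = f i ∨ h = f (i + 1) := by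
  have hne : f i ≠ f (i + 1) := enum_ne_succ injf n2 i
  have hpair : ({f i, f (i + 1)} : Finset G.E) ⊆ F.filter (fun g => x i ∈ G.ends g) := by
    intro z hz
    rcases Finset.mem_insert.mp hz with rfl | hz
    · exact Finset.mem_filter.mpr ⟨hmemF i, enum_mem_right hends i⟩
    · rw [Finset.mem_singleton] at hz; subst hz
      exact Finset.mem_filter.mpr ⟨hmemF (i + 1), enum_mem_left hends i⟩
  have hcard2 : ({f i, f (i + 1)} : Finset G.E).card = 2 := by
    rw [Finset.card_insert_of_notMem (by simpa using hne), Finset.card_singleton]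
  have heq : ({f i, f (i + 1)} : Finset G.E) = F.filter (fun g => x i ∈ G.ends g) := by
    apply Finset.eq_of_subset_of_card_le hpair
    rw [hcard2]
    exact hdegi
  have hmem : h ∈ ({f i, f (i + 1)} : Finset G.E) := by
    rw [heq]; exact Finset.mem_filter.mpr ⟨hh, hmemh⟩
  rcases Finset.mem_insert.mp hmem with h1 | h1
  · exact Or.inl h1
  · exact Or.inr (Finset.mem_singleton.mp h1)

/-- The chase lemma. -/
lemma chase {F K₁ : Finset G.E} (hK₁F : K₁ ⊆ F) (hreg : G.TwoReg K₁)
    (hends : ∀ i, G.ends (f i) = s(x (i - 1), x i))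
    (a : ZMod n) (m : ℕ)
    (corr : ∀ j : ℕ, j < m → ∀ h ∈ F, x (a + j) ∈ G.ends h →
      h = f (a + j) ∨ h = f (a + j + 1))
    (hstart : f a ∈ K₁) : f (a + m) ∈ K₁ := by
  induction m with
  | zero => simpa using hstart
  | succ m ih =>
    have hfam : f (a + m) ∈ K₁ := ih (fun j hj => corr j (by omega))
    by_contra hnot
    have hv : x (a + m) ∈ G.ends (f (a + m)) := enum_mem_right hends _
    have hpos : 0 < G.degIn K₁ (x (a + m)) := degIn_pos_iff.mpr ⟨_, hfam, hv⟩
    have h2 : G.degIn K₁ (x (a + m)) = 2 := hreg _ hpos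
    have hsub : K₁.filter (fun h => x (a + m) ∈ G.ends h) ⊆ {f (a + m)} := by
      intro h hh
      rw [Finset.mem_filter] at hh
      rcases corr m (by omega) h (hK₁F hh.1) hh.2 with h1 | h1
      · rw [Finset.mem_singleton]; exact h1
      · exfalso
        apply hnot
        have hc : a + ((m + 1 : ℕ) : ZMod n) = a + (m : ZMod n) + 1 := by push_cast; ring
        rw [hc, ← h1]
        exact hh.1
    have hle := Finset.card_le_card hsub
    rw [Finset.card_singleton] at hle
    have hle2 : G.degIn K₁ (x (a + m)) ≤ 1 := hle
    omega

lemma zmod_succ_val_parity (heven : Even n) (n2 : 2 ≤ n) (i : ZMod n) :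
    Even ((i + 1).val) ↔ ¬ Even i.val := by
  haveI : NeZero n := ⟨by omega⟩
  haveI : Fact (1 < n) := ⟨by omega⟩
  have h1 : (i + 1).val = (i.val + 1) % n := by
    rw [ZMod.val_add, ZMod.val_one n]
  have hlt : i.val < n := ZMod.val_lt i
  rcases Nat.lt_or_ge (i.val + 1) n with h | h
  · rw [h1, Nat.mod_eq_of_lt h]
    exact Nat.even_add_one
  · have hin : i.val + 1 = n := by omega
    rw [h1, hin, Nat.mod_self]
    rw [Nat.even_iff] at heven
    rw [Nat.even_iff, Nat.even_iff]
    omega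

lemma enum_degIn_image [NeZero n] (injf : Function.Injective f) (injx : Function.Injective x)
    (n2 : 2 ≤ n) (hends : ∀ i, G.ends (f i) = s(x (i - 1), x i)) (j : ZMod n) :
    G.degIn (Finset.univ.image f) (x j) = 2 := by
  have heq : (Finset.univ.image f).filter (fun g => x j ∈ G.ends g) = {f j, f (j + 1)} := by
    ext z
    rw [Finset.mem_filter]
    constructor
    · rintro ⟨hz, hmem⟩
      obtain ⟨m, _, rfl⟩ := Finset.mem_image.mp hz
      rcases enum_mem_pair injx hends hmem with h | h
      · subst h; exact Finset.mem_insert_self _ _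
      · subst h; exact Finset.mem_insert.mpr (Or.inr (Finset.mem_singleton_self _))
    · intro hz
      rcases Finset.mem_insert.mp hz with rfl | hz
      · exact ⟨Finset.mem_image.mpr ⟨j, Finset.mem_univ j, rfl⟩, enum_mem_right hends j⟩
      · rw [Finset.mem_singleton] at hz; subst hz
        exact ⟨Finset.mem_image.mpr ⟨j + 1, Finset.mem_univ _, rfl⟩, enum_mem_left hends j⟩
  have hne : f j ≠ f (j + 1) := enum_ne_succ injf n2 j
  show (Finset.filter _ _).card = 2
  rw [heq]
  rw [Finset.card_insert_of_notMem (by simpa using hne), Finset.card_singleton]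

lemma enum_twoReg_image [NeZero n] (injf : Function.Injective f) (injx : Function.Injective x)
    (n2 : 2 ≤ n) (hends : ∀ i, G.ends (f i) = s(x (i - 1), x i)) :
    G.TwoReg (Finset.univ.image f) := by
  intro v hv
  obtain ⟨g, hg, hvm⟩ := degIn_pos_iff.mp hv
  obtain ⟨m, _, rfl⟩ := Finset.mem_image.mp hg
  rcases enum_vtx_cases hends hvm with rfl | rfl
  · exact enum_degIn_image injf injx n2 hends (m - 1)
  · exact enum_degIn_image injf injx n2 hends m

lemma enum_matching_filter [NeZero n] (hl : G.Loopless) (injf : Function.Injective f)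
    (injx : Function.Injective x)
    (hends : ∀ i, G.ends (f i) = s(x (i - 1), x i))
    (p : ZMod n → Prop) [DecidablePred p]
    (halt : ∀ i, p i → ¬ p (i + 1)) :
    G.IsMatching ((Finset.univ.filter p).image f) := by
  constructor
  · intro e _; exact hl e
  · intro e he k hk hne w hwe hwk
    obtain ⟨i, hi, rfl⟩ := Finset.mem_image.mp he
    obtain ⟨j, hj, rfl⟩ := Finset.mem_image.mp hk
    have hpi : p i := (Finset.mem_filter.mp hi).2
    have hpj : p j := (Finset.mem_filter.mp hj).2
    rcases enum_share injx hends hwe hwk with h1 | h1 | h1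
    · exact hne (by rw [h1])
    · subst h1; exact halt i hpi hpj
    · subst h1; exact halt j hpj hpi

end Enum

section GoodMatchings

variable {G : Multigraph}

lemma Good.subset {F F' : Finset G.E} (hF : G.Good F) (h : F' ⊆ F) : G.Good F' :=
  ⟨fun v => le_trans (degIn_mono h v) (hF.1 v), fun K hK => hF.2 K (fun z hz => h (hK hz))⟩

lemma degIn_union_eq {A B : Finset G.E} (h : Disjoint A B) (v : G.V) :
    G.degIn (A ∪ B) v = G.degIn A v + G.degIn B v := by
  rw [degIn, degIn, degIn, Finset.filter_union]
  exact Finset.card_union_of_disjoint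
    (h.mono (Finset.filter_subset _ _) (Finset.filter_subset _ _))

theorem good_to_matchings_aux (hl : G.Loopless) :
    ∀ (N : ℕ) (F : Finset G.E), F.card ≤ N → G.Good F →
    ∃ H H' : Finset G.E, G.IsMatching H ∧ G.IsMatching H' ∧ Disjoint H H' ∧ H ∪ H' = F := by
  intro N
  induction N with
  | zero =>
    intro F hcard _
    have hF : F = ∅ := Finset.card_eq_zero.mp (le_antisymm hcard (Nat.zero_le _))
    subst hF
    exact ⟨∅, ∅, isMatching_empty, isMatching_empty, Finset.disjoint_empty_left _, by simp⟩
  | succ N ih =>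
    intro F hcard hF
    by_cases hFe : F = ∅
    · subst hFe
      exact ⟨∅, ∅, isMatching_empty, isMatching_empty, Finset.disjoint_empty_left _, by simp⟩
    by_cases hdeg1 : ∃ v, G.degIn F v = 1
    · -- remove a pendant edge
      obtain ⟨v, hv⟩ := hdeg1
      obtain ⟨g, hg⟩ := Finset.card_eq_one.mp hv
      have hgF : g ∈ F := by
        have h0 : g ∈ F.filter (fun f => v ∈ G.ends f) := hg ▸ Finset.mem_singleton_self g
        exact (Finset.mem_filter.mp h0).1
      have hvg : v ∈ G.ends g := by
        have h0 : g ∈ F.filter (fun f => v ∈ G.ends f) := hg ▸ Finset.mem_singleton_self g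
        exact (Finset.mem_filter.mp h0).2
      set F' := F.erase g with hF'
      have hF'sub : F' ⊆ F := Finset.erase_subset _ _
      have hF'good : G.Good F' := hF.subset hF'sub
      have hF'card : F'.card ≤ N := by
        rw [hF', Finset.card_erase_of_mem hgF]
        omega
      obtain ⟨H, H', hH, hH', hd, hun⟩ := ih F' hF'card hF'good
      have hvzero : G.degIn F' v = 0 := by
        rw [degIn, hF', Finset.filter_erase, hg]
        simp
      have hz := Sym2.other_spec' hvg
      set z := Sym2.Mem.other' hvg with hzdef
      have hends_g : G.ends g = s(v, z) := hz.symm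
      have hzsum : G.degIn H z + G.degIn H' z ≤ 1 := by
        have h1 : G.degIn F' z = G.degIn H z + G.degIn H' z := by
          rw [← hun, degIn_union_eq hd]
        have hgz : g ∈ F.filter (fun f => z ∈ G.ends f) := by
          refine Finset.mem_filter.mpr ⟨hgF, ?_⟩
          rw [hends_g]; exact Sym2.mem_mk_right _ _
        have h4 : (F.filter (fun f => z ∈ G.ends f)).erase g =
            F'.filter (fun f => z ∈ G.ends f) := by
          rw [hF', Finset.filter_erase]
        have h2 : G.degIn F' z + 1 ≤ G.degIn F z := by
          rw [degIn, degIn, ← h4, Finset.card_erase_of_mem hgz]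
          have hpos : 0 < (F.filter (fun f => z ∈ G.ends f)).card :=
            Finset.card_pos.mpr ⟨g, hgz⟩
          omega
        have h3 := hF.1 z
        omega
      have hfree : ∀ (M : Finset G.E), M ⊆ F' → G.degIn M z = 0 →
          ∀ w ∈ G.ends g, ∀ f ∈ M, w ∉ G.ends f := by
        intro M hMF' hMz w hw f hfM hwf
        rw [hends_g, Sym2.mem_iff] at hw
        rcases hw with rfl | rfl
        · have hne0 : G.degIn F' w ≠ 0 := by
            intro hc
            rw [degIn_eq_zero_iff] at hc
            exact hc f (hMF' hfM) hwf
          exact hne0 hvzero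
        · rw [degIn_eq_zero_iff] at hMz
          exact hMz f hfM hwf
      have hgnotF' : g ∉ F' := Finset.notMem_erase g F
      by_cases hHz : G.degIn H z = 0
      · refine ⟨insert g H, H', ?_, hH', ?_, ?_⟩
        · exact hH.insert (hl g) (hfree H (by rw [← hun]; exact Finset.subset_union_left) hHz)
        · refine Finset.disjoint_insert_left.mpr ⟨?_, hd⟩
          intro hgH'
          exact hgnotF' (by rw [← hun]; exact Finset.mem_union_right _ hgH')
        · rw [Finset.insert_union, hun, hF', Finset.insert_erase hgF]
      · have hH'z : G.degIn H' z = 0 := by omega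
        refine ⟨H, insert g H', hH, ?_, ?_, ?_⟩
        · exact hH'.insert (hl g) (hfree H' (by rw [← hun]; exact Finset.subset_union_right) hH'z)
        · refine Finset.disjoint_insert_right.mpr ⟨?_, hd⟩
          intro hgH
          exact hgnotF' (by rw [← hun]; exact Finset.mem_union_left _ hgH)
        · rw [Finset.union_insert, hun, hF', Finset.insert_erase hgF]
    · -- all degrees are 0 or 2 : peel off a cycle
      have hreg : G.TwoReg F := by
        intro v hv
        have h1 := hF.1 v
        have h2 : G.degIn F v ≠ 1 := fun hc => hdeg1 ⟨v, hc⟩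
        omega
      obtain ⟨g₀, hg₀⟩ := Finset.nonempty_iff_ne_empty.mpr hFe
      obtain ⟨u₀, hu₀⟩ := exists_mem_ends (G := G) g₀
      obtain ⟨n, f, x, n2, injf, injx, hmemK, hf0, hx0, hends, hclosure⟩ :=
        orbit hl hreg hg₀ hu₀
      haveI : NeZero n := ⟨by omega⟩
      set K₀ := Finset.univ.image f with hK₀
      have hK₀F : K₀ ⊆ F := by
        intro z hz
        obtain ⟨m, _, rfl⟩ := Finset.mem_image.mp hz
        exact hmemK m
      have hK₀card : K₀.card = n := by
        rw [hK₀, Finset.card_image_of_injective _ injf, Finset.card_univ, ZMod.card]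
      have hK₀reg : G.TwoReg K₀ := enum_twoReg_image injf injx n2 hends
      have hneven : Even n := by
        have h0 := hF.2 K₀ hK₀F hK₀reg
        rwa [hK₀card] at h0
      set F' := F \ K₀ with hF'
      have hF'good : G.Good F' := hF.subset (Finset.sdiff_subset)
      have hF'card : F'.card ≤ N := by
        rw [hF', Finset.card_sdiff_of_subset hK₀F, hK₀card]
        omega
      obtain ⟨H, H', hH, hH', hd, hun⟩ := ih F' hF'card hF'good
      have hHsub : H ⊆ F' := by rw [← hun]; exact Finset.subset_union_left
      have hH'sub : H' ⊆ F' := by rw [← hun]; exact Finset.subset_union_right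
      set Hev := (Finset.univ.filter (fun i : ZMod n => Even i.val)).image f with hHev
      set Hod := (Finset.univ.filter (fun i : ZMod n => ¬ Even i.val)).image f with hHod
      have hsepK₀ : ∀ h ∈ F', ∀ i : ZMod n, ∀ w, w ∈ G.ends (f i) → w ∉ G.ends h := by
        intro h hh i w hw hwh
        have hhF : h ∈ F := (Finset.mem_sdiff.mp hh).1
        have hhK : h ∉ K₀ := (Finset.mem_sdiff.mp hh).2
        rcases enum_vtx_cases hends hw with rfl | rfl
        · obtain ⟨j, hj⟩ := hclosure h hhF (i - 1) hwh
          exact hhK (by rw [hK₀, ← hj]; exact Finset.mem_image_of_mem f (Finset.mem_univ j))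
        · obtain ⟨j, hj⟩ := hclosure h hhF i hwh
          exact hhK (by rw [hK₀, ← hj]; exact Finset.mem_image_of_mem f (Finset.mem_univ j))
      have hHevM : G.IsMatching Hev :=
        enum_matching_filter hl injf injx hends _
          (fun i hi hi1 => (zmod_succ_val_parity hneven n2 i).mp hi1 hi)
      have hHodM : G.IsMatching Hod :=
        enum_matching_filter hl injf injx hends _
          (fun i hi hi1 => hi1 ((zmod_succ_val_parity hneven n2 i).mpr hi))
      have hHevK₀ : Hev ⊆ K₀ := by
        rw [hHev, hK₀]
        exact Finset.image_subset_image (Finset.filter_subset _ _)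
      have hHodK₀ : Hod ⊆ K₀ := by
        rw [hHod, hK₀]
        exact Finset.image_subset_image (Finset.filter_subset _ _)
      have hdisjK₀F' : Disjoint K₀ F' := by
        rw [hF']
        exact Finset.disjoint_sdiff
      refine ⟨Hev ∪ H, Hod ∪ H', ?_, ?_, ?_, ?_⟩
      · refine hHevM.union hH ?_
        intro fe hfe g hg w hwfe
        obtain ⟨i, _, rfl⟩ := Finset.mem_image.mp hfe
        exact hsepK₀ g (hHsub hg) i w hwfe
      · refine hHodM.union hH' ?_
        intro fe hfe g hg w hwfe
        obtain ⟨i, _, rfl⟩ := Finset.mem_image.mp hfe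
        exact hsepK₀ g (hH'sub hg) i w hwfe
      · rw [Finset.disjoint_union_left]
        constructor
        · rw [Finset.disjoint_union_right]
          constructor
          · -- Hev vs Hod
            rw [Finset.disjoint_left]
            intro z hz1 hz2
            obtain ⟨i, hi, rfl⟩ := Finset.mem_image.mp hz1
            obtain ⟨j, hj, hji⟩ := Finset.mem_image.mp hz2
            have hij := injf hji
            subst hij
            exact (Finset.mem_filter.mp hj).2 (Finset.mem_filter.mp hi).2
          · exact (hdisjK₀F'.mono hHevK₀ hH'sub)
        · rw [Finset.disjoint_union_right]
          exact ⟨(hdisjK₀F'.mono hHodK₀ hHsub).symm, hd⟩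
      · have hK₀un : Hev ∪ Hod = K₀ := by
          rw [hHev, hHod, hK₀, ← Finset.image_union, Finset.filter_union_filter_not_eq]
        calc (Hev ∪ H) ∪ (Hod ∪ H') = (Hev ∪ Hod) ∪ (H ∪ H') := by
              rw [Finset.union_assoc, Finset.union_assoc]
              congr 1
              rw [← Finset.union_assoc, ← Finset.union_assoc, Finset.union_comm H Hod]
          _ = K₀ ∪ F' := by rw [hK₀un, hun]
          _ = F := by rw [hF', Finset.union_sdiff_of_subset hK₀F]

theorem good_to_matchings (hl : G.Loopless) {F : Finset G.E} (hF : G.Good F) :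
    ∃ H H' : Finset G.E, G.IsMatching H ∧ G.IsMatching H' ∧ Disjoint H H' ∧ H ∪ H' = F :=
  good_to_matchings_aux hl F.card F le_rfl hF

lemma Good.card_le_nu2 (hl : G.Loopless) {F : Finset G.E} (hF : G.Good F) :
    F.card ≤ G.nu2 := by
  obtain ⟨H, H', hH, hH', hd, hun⟩ := good_to_matchings hl hF
  have h0 := le_nu2 hH hH' hd
  rw [← Finset.card_union_of_disjoint hd, hun] at h0
  exact h0

lemma exists_good_nu2 : ∃ F : Finset G.E, G.Good F ∧ F.card = G.nu2 := by
  obtain ⟨H, H', hH, hH', hd, hcard⟩ := exists_nu2 (G := G)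
  exact ⟨H ∪ H', good_of_matchings hH hH' hd,
    by rw [Finset.card_union_of_disjoint hd]; exact hcard⟩

end GoodMatchings


/-! ### Degree transfer, branch vertices, surgery -/

section Surgery

variable {G : Multigraph}

lemma zmod_one_ne_zero {n : ℕ} (n2 : 2 ≤ n) : (1 : ZMod n) ≠ 0 := by
  haveI : NeZero n := ⟨by omega⟩
  haveI : Fact (1 < n) := ⟨by omega⟩
  intro hc
  have h := congrArg ZMod.val hc
  rw [ZMod.val_one n, ZMod.val_zero] at h
  omega

lemma zmod_natCast_val {n : ℕ} [NeZero n] (i : ZMod n) : ((i.val : ℕ) : ZMod n) = i := by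
  apply ZMod.val_injective
  rw [ZMod.val_natCast, Nat.mod_eq_of_lt (ZMod.val_lt i)]

lemma deg_eq_degIn_univ (hl : G.Loopless) (v : G.V) :
    G.deg v = G.degIn Finset.univ v := by
  rw [deg, degIn, Finset.card_filter]
  apply Finset.sum_congr rfl
  intro e _
  have hne : G.ends e ≠ Sym2.diag v := by
    intro hc
    exact hl e (by show (G.ends e).IsDiag; rw [hc]; exact Sym2.diag_isDiag v)
  rw [if_neg hne]

variable {n : ℕ} {f : ZMod n → G.E} {x : ZMod n → G.V}

/-- If every cycle vertex has degree two, the cycle is the whole (connected) graph. -/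
lemma nonbranch (hl : G.Loopless) (hconn : G.Connected)
    (injf : Function.Injective f) (injx : Function.Injective x) (n2 : 2 ≤ n)
    (hends : ∀ i, G.ends (f i) = s(x (i - 1), x i))
    (hdeg2 : ∀ i : ZMod n, G.deg (x i) = 2) :
    (∀ v, G.deg v = 2) ∧ Fintype.card G.E = n := by
  haveI : NeZero n := ⟨by omega⟩
  have hdegIn : ∀ i : ZMod n, G.degIn Finset.univ (x i) ≤ 2 := by
    intro i
    rw [← deg_eq_degIn_univ hl, hdeg2 i]
  have hedges : ∀ (i : ZMod n) (h : G.E), x i ∈ G.ends h → h = f i ∨ h = f (i + 1) := by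
    intro i h hmem
    exact enum_edges_at (fun j => Finset.mem_univ (f j)) injf n2 hends i (hdegIn i)
      (Finset.mem_univ h) hmem
  have hreach : ∀ v : G.V, ∃ i, x i = v := by
    intro v
    have hrt := hconn (x 0) v
    induction hrt with
    | refl => exact ⟨0, rfl⟩
    | @tail b c _ hbc ih =>
      obtain ⟨i, rfl⟩ := ih
      obtain ⟨e, he⟩ := hbc
      have hxe : x i ∈ G.ends e := by rw [he]; exact Sym2.mem_mk_left _ _
      have hce : c ∈ G.ends e := by rw [he]; exact Sym2.mem_mk_right _ _
      rcases hedges i e hxe with rfl | rfl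
      · rcases enum_vtx_cases hends hce with rfl | rfl
        · exact ⟨i - 1, rfl⟩
        · exact ⟨i, rfl⟩
      · rcases enum_vtx_cases hends hce with rfl | rfl
        · exact ⟨i + 1 - 1, rfl⟩
        · exact ⟨i + 1, rfl⟩
  have hsurj : Function.Surjective f := by
    intro h
    obtain ⟨u, hu⟩ := exists_mem_ends (G := G) h
    obtain ⟨i, rfl⟩ := hreach u
    rcases hedges i h hu with rfl | rfl
    · exact ⟨i, rfl⟩
    · exact ⟨i + 1, rfl⟩
  constructor
  · intro v
    obtain ⟨i, rfl⟩ := hreach v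
    exact hdeg2 i
  · rw [← Fintype.card_of_bijective ⟨injf, hsurj⟩, ZMod.card]

/-- At a branch vertex of the cycle there is a third edge, leading to a fresh low-degree
vertex. -/
lemma branch_edge (hl : G.Loopless)
    (hedge : ∀ g : G.E, ∀ a b : G.V, G.ends g = s(a, b) → ¬ (3 ≤ G.deg a ∧ 3 ≤ G.deg b))
    {F : Finset G.E} (hdeg : ∀ v, G.degIn F v ≤ 2)
    (hmemF : ∀ i, f i ∈ F) (injf : Function.Injective f) (injx : Function.Injective x)
    (n2 : 2 ≤ n) (hends : ∀ i, G.ends (f i) = s(x (i - 1), x i))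
    {i₀ : ZMod n} (h3 : 3 ≤ G.deg (x i₀)) :
    ∃ (g : G.E) (y : G.V), g ∉ F ∧ (∀ j, g ≠ f j) ∧ G.ends g = s(x i₀, y) ∧
      (∀ j, y ≠ x j) ∧ G.degIn F y ≤ 1 := by
  haveI : NeZero n := ⟨by omega⟩
  -- find a third edge at x i₀
  have h3' : 3 ≤ (Finset.univ.filter (fun g => x i₀ ∈ G.ends g)).card := by
    rw [← degIn, ← deg_eq_degIn_univ hl]; exact h3
  have hnotsub : ¬ (Finset.univ.filter (fun g => x i₀ ∈ G.ends g) ⊆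
      ({f i₀, f (i₀ + 1)} : Finset G.E)) := by
    intro hsub
    have hc := Finset.card_le_card hsub
    have : ({f i₀, f (i₀ + 1)} : Finset G.E).card ≤ 2 := Finset.card_insert_le _ _ |>.trans
      (by rw [Finset.card_singleton])
    omega
  obtain ⟨g, hgmem, hgpair⟩ := Finset.not_subset.mp hnotsub
  have hxg : x i₀ ∈ G.ends g := (Finset.mem_filter.mp hgmem).2
  set y := Sym2.Mem.other' hxg with hy
  have hendsg : G.ends g = s(x i₀, y) := (Sym2.other_spec' hxg).symm
  have hyne : y ≠ x i₀ := other'_ne (hl g) hxg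
  have hgne : ∀ j, g ≠ f j := by
    intro j hc
    subst hc
    rcases enum_mem_pair injx hends hxg with h1 | h1
    · exact hgpair (by rw [h1]; exact Finset.mem_insert_self _ _)
    · exact hgpair (by rw [h1]; exact Finset.mem_insert.mpr (Or.inr (Finset.mem_singleton_self _)))
  have hdegy : G.deg y ≤ 2 := by
    have := hedge g (x i₀) y hendsg
    by_contra hc
    exact this ⟨h3, by omega⟩
  have hyx : ∀ j, y ≠ x j := by
    intro j hc
    have hxjg : x j ∈ G.ends g := by rw [hendsg, ← hc]; exact Sym2.mem_mk_right _ _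
    have hdegy' : G.deg (x j) ≤ 2 := by rw [← hc]; exact hdegy
    have hsub : ({f j, f (j + 1), g} : Finset G.E) ⊆
        Finset.univ.filter (fun h => x j ∈ G.ends h) := by
      intro z hz
      rcases Finset.mem_insert.mp hz with rfl | hz
      · exact Finset.mem_filter.mpr ⟨Finset.mem_univ _, enum_mem_right hends j⟩
      rcases Finset.mem_insert.mp hz with rfl | hz
      · exact Finset.mem_filter.mpr ⟨Finset.mem_univ _, enum_mem_left hends j⟩
      · rw [Finset.mem_singleton] at hz; subst hz
        exact Finset.mem_filter.mpr ⟨Finset.mem_univ _, hxjg⟩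
    have hcard3 : ({f j, f (j + 1), g} : Finset G.E).card = 3 := by
      rw [Finset.card_insert_of_notMem, Finset.card_insert_of_notMem, Finset.card_singleton]
      · simp only [Finset.mem_singleton]
        exact fun hc => (hgne (j + 1)) hc.symm
      · simp only [Finset.mem_insert, Finset.mem_singleton]
        push_neg
        exact ⟨enum_ne_succ injf n2 j, fun hc => (hgne j) hc.symm⟩
    have hle := Finset.card_le_card hsub
    rw [hcard3] at hle
    rw [deg_eq_degIn_univ hl, degIn] at hdegy'
    omega
  have hgF : g ∉ F := by
    intro hgFmem
    have hsub : ({f i₀, f (i₀ + 1), g} : Finset G.E) ⊆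
        F.filter (fun h => x i₀ ∈ G.ends h) := by
      intro z hz
      rcases Finset.mem_insert.mp hz with rfl | hz
      · exact Finset.mem_filter.mpr ⟨hmemF _, enum_mem_right hends i₀⟩
      rcases Finset.mem_insert.mp hz with rfl | hz
      · exact Finset.mem_filter.mpr ⟨hmemF _, enum_mem_left hends i₀⟩
      · rw [Finset.mem_singleton] at hz; subst hz
        exact Finset.mem_filter.mpr ⟨hgFmem, hxg⟩
    have hcard3 : ({f i₀, f (i₀ + 1), g} : Finset G.E).card = 3 := by
      rw [Finset.card_insert_of_notMem, Finset.card_insert_of_notMem, Finset.card_singleton]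
      · simp only [Finset.mem_singleton]
        exact fun hc => (hgne (i₀ + 1)) hc.symm
      · simp only [Finset.mem_insert, Finset.mem_singleton]
        push_neg
        exact ⟨enum_ne_succ injf n2 i₀, fun hc => (hgne i₀) hc.symm⟩
    have hle := Finset.card_le_card hsub
    rw [hcard3] at hle
    have := hdeg (x i₀)
    rw [degIn] at this
    omega
  have hyF : G.degIn F y ≤ 1 := by
    have hsub : F.filter (fun h => y ∈ G.ends h) ⊆
        (Finset.univ.filter (fun h => y ∈ G.ends h)).erase g := by
      intro z hz
      rw [Finset.mem_filter] at hz
      refine Finset.mem_erase.mpr ⟨?_, Finset.mem_filter.mpr ⟨Finset.mem_univ _, hz.2⟩⟩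
      intro hc; subst hc; exact hgF hz.1
    have hle := Finset.card_le_card hsub
    have hyg : g ∈ Finset.univ.filter (fun h => y ∈ G.ends h) := by
      refine Finset.mem_filter.mpr ⟨Finset.mem_univ _, ?_⟩
      rw [hendsg]; exact Sym2.mem_mk_right _ _
    rw [Finset.card_erase_of_mem hyg] at hle
    rw [deg_eq_degIn_univ hl, degIn] at hdegy
    rw [degIn]
    omega
  exact ⟨g, y, hgF, hgne, hendsg, hyx, hyF⟩

/-- The surgery lemma (core version, removed edge is `f i₀` with `i₀ ≠ 0`). -/
lemma surgery0 (hl : G.Loopless) {F : Finset G.E} {e' : G.E}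
    (hdeg : ∀ v, G.degIn F v ≤ 2)
    (hF0 : ∀ K ⊆ F, G.TwoReg K → e' ∉ K → Even K.card)
    (n2 : 2 ≤ n) (injf : Function.Injective f) (injx : Function.Injective x)
    (hends : ∀ i, G.ends (f i) = s(x (i - 1), x i))
    (hmemF : ∀ i, f i ∈ F) (hf0 : f 0 = e')
    {i₀ : ZMod n} (hi₀ : i₀ ≠ 0)
    {g : G.E} {y : G.V} (hgF : g ∉ F) (hgne : ∀ j, g ≠ f j)
    (hendsg : G.ends g = s(x i₀, y)) (hyx : ∀ j, y ≠ x j) (hyF : G.degIn F y ≤ 1) :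
    ∃ F₂ : Finset G.E, (∀ v, G.degIn F₂ v ≤ 2) ∧
      (∀ K ⊆ F₂, G.TwoReg K → Even K.card ∧ e' ∉ K) ∧ e' ∈ F₂ ∧ F₂.card = F.card := by
  haveI : NeZero n := ⟨by omega⟩
  set F₂ := insert g (F.erase (f i₀)) with hF₂
  have hfi₀F : f i₀ ∈ F := hmemF i₀
  have hgerase : g ∉ F.erase (f i₀) := fun hc => hgF (Finset.mem_of_mem_erase hc)
  have hfi₀notF₂ : f i₀ ∉ F₂ := by
    rw [hF₂, Finset.mem_insert]
    push_neg
    exact ⟨fun hc => hgne i₀ hc.symm, Finset.notMem_erase _ _⟩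
  have hxgmem : x i₀ ∈ G.ends g := by rw [hendsg]; exact Sym2.mem_mk_left _ _
  have hygmem : y ∈ G.ends g := by rw [hendsg]; exact Sym2.mem_mk_right _ _
  -- characterization of F₂-edges at cycle vertices other than x i₀
  have hchar : ∀ (j : ZMod n), j ≠ i₀ → ∀ h ∈ F₂, x j ∈ G.ends h →
      h = f j ∨ h = f (j + 1) := by
    intro j hj h hh hxj
    rcases Finset.mem_insert.mp hh with rfl | hh
    · exfalso
      rw [hendsg, Sym2.mem_iff] at hxj
      rcases hxj with h1 | h1
      · exact hj (injx h1)
      · exact hyx j h1.symm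
    · exact enum_edges_at hmemF injf n2 hends j (hdeg (x j)) (Finset.mem_of_mem_erase hh) hxj
  -- F₂-edges at x i₀ are among {g, f (i₀+1)}
  have hchar₀ : ∀ h ∈ F₂, x i₀ ∈ G.ends h → h = g ∨ h = f (i₀ + 1) := by
    intro h hh hxj
    rcases Finset.mem_insert.mp hh with rfl | hh
    · exact Or.inl rfl
    · rcases enum_edges_at hmemF injf n2 hends i₀ (hdeg (x i₀))
        (Finset.mem_of_mem_erase hh) hxj with h1 | h1
      · exfalso; rw [h1] at hh; exact Finset.notMem_erase _ _ hh
      · exact Or.inr h1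
  refine ⟨F₂, ?_, ?_, ?_, ?_⟩
  · -- degrees
    intro v
    by_cases hvg : v ∈ G.ends g
    · have hF₂fil : F₂.filter (fun h => v ∈ G.ends h) =
          insert g ((F.erase (f i₀)).filter (fun h => v ∈ G.ends h)) := by
        rw [hF₂, Finset.filter_insert, if_pos hvg]
      rw [degIn, hF₂fil]
      have hle := Finset.card_insert_le g ((F.erase (f i₀)).filter (fun h => v ∈ G.ends h))
      rw [hendsg, Sym2.mem_iff] at hvg
      rcases hvg with rfl | hvy
      · -- v = x i₀
        have herase : (F.erase (f i₀)).filter (fun h => x i₀ ∈ G.ends h) =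
            (F.filter (fun h => x i₀ ∈ G.ends h)).erase (f i₀) := Finset.filter_erase _ _ _
        have hfi₀mem : f i₀ ∈ F.filter (fun h => x i₀ ∈ G.ends h) :=
          Finset.mem_filter.mpr ⟨hfi₀F, enum_mem_right hends i₀⟩
        have h1 : ((F.erase (f i₀)).filter (fun h => x i₀ ∈ G.ends h)).card ≤ 1 := by
          rw [herase, Finset.card_erase_of_mem hfi₀mem]
          have := hdeg (x i₀)
          rw [degIn] at this
          omega
        omega
      · -- v = y
        have hyF' : G.degIn F v ≤ 1 := by rw [hvy]; exact hyF
        have h1 : ((F.erase (f i₀)).filter (fun h => v ∈ G.ends h)).card ≤ 1 := by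
          have hsub : (F.erase (f i₀)).filter (fun h => v ∈ G.ends h) ⊆
              F.filter (fun h => v ∈ G.ends h) :=
            Finset.filter_subset_filter _ (Finset.erase_subset _ _)
          have := Finset.card_le_card hsub
          rw [degIn] at hyF'
          omega
        omega
    · have hF₂fil : F₂.filter (fun h => v ∈ G.ends h) =
          (F.erase (f i₀)).filter (fun h => v ∈ G.ends h) := by
        rw [hF₂, Finset.filter_insert, if_neg hvg]
      rw [degIn, hF₂fil]
      have hsub : (F.erase (f i₀)).filter (fun h => v ∈ G.ends h) ⊆
          F.filter (fun h => v ∈ G.ends h) :=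
        Finset.filter_subset_filter _ (Finset.erase_subset _ _)
      have := Finset.card_le_card hsub
      have h2 := hdeg v
      rw [degIn] at h2
      omega
  · -- no bad 2-regular subsets
    intro K hK hreg
    -- step 1 : g ∉ K
    have hgK : g ∉ K := by
      intro hgK
      -- partner at x i₀ is f (i₀ + 1)
      have hpos : 0 < G.degIn K (x i₀) := degIn_pos_iff.mpr ⟨g, hgK, hxgmem⟩
      have h2 := hreg _ hpos
      have hfK : f (i₀ + 1) ∈ K := by
        by_contra hnot
        have hsub : K.filter (fun h => x i₀ ∈ G.ends h) ⊆ {g} := by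
          intro h hh
          rw [Finset.mem_filter] at hh
          rcases hchar₀ h (hK hh.1) hh.2 with h1 | h1
          · rw [Finset.mem_singleton]; exact h1
          · exact absurd (h1 ▸ hh.1) hnot
        have hle := Finset.card_le_card hsub
        rw [Finset.card_singleton] at hle
        rw [degIn] at h2
        omega
      -- chase around the cycle
      have hfinK : f (i₀ + 1 + ((n - 1 : ℕ) : ZMod n)) ∈ K := by
        refine chase hK hreg hends (i₀ + 1) (n - 1) ?_ hfK
        intro jj hjj h hh hxm
        refine hchar _ ?_ h hh hxm
        intro hc
        have hc2 : (1 : ZMod n) + (jj : ZMod n) = 0 := by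
          have h5 : i₀ + (1 + (jj : ZMod n)) = i₀ + 0 := by
            rw [add_zero, ← add_assoc]; exact hc
          exact add_left_cancel h5
        have hc3 : (((jj + 1 : ℕ)) : ZMod n) = 0 := by push_cast; rw [add_comm]; exact hc2
        have hdvd := (ZMod.natCast_eq_zero_iff _ n).mp hc3
        have := Nat.le_of_dvd (by omega) hdvd
        omega
      have hii : i₀ + 1 + ((n - 1 : ℕ) : ZMod n) = i₀ := by
        have h5 : ((1 + (n - 1) : ℕ) : ZMod n) = 0 := by
          rw [show 1 + (n - 1) = n from by omega, ZMod.natCast_self]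
        push_cast at h5
        rw [add_assoc]
        rw [show (1 : ZMod n) + ((n - 1 : ℕ) : ZMod n) = 0 from h5, add_zero]
      rw [hii] at hfinK
      exact hfi₀notF₂ (hK hfinK)
    -- step 2 : e' ∉ K
    have he'K : e' ∉ K := by
      intro he'K
      rw [← hf0] at he'K
      set d := i₀.val with hd
      have hd1 : 1 ≤ d := by
        rcases Nat.eq_zero_or_pos d with h0 | h0
        · exact absurd (ZMod.val_injective n (by rw [← hd, h0, ZMod.val_zero])) hi₀
        · exact h0
      have hdn : d < n := ZMod.val_lt i₀
      have hchKd : f ((0 : ZMod n) + ((d - 1 : ℕ) : ZMod n)) ∈ K := by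
        refine chase hK hreg hends 0 (d - 1) ?_ he'K
        intro jj hjj h hh hxm
        refine hchar _ ?_ h hh hxm
        intro hc
        rw [zero_add] at hc
        have hv := congrArg ZMod.val hc
        rw [ZMod.val_natCast, Nat.mod_eq_of_lt (by omega)] at hv
        omega
      rw [zero_add] at hchKd
      -- but x (d-1) has at most one K-edge
      have hxd : x ((d - 1 : ℕ) : ZMod n) ∈ G.ends (f ((d - 1 : ℕ) : ZMod n)) :=
        enum_mem_right hends _
      have hpos : 0 < G.degIn K (x ((d - 1 : ℕ) : ZMod n)) :=
        degIn_pos_iff.mpr ⟨_, hchKd, hxd⟩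
      have h2 := hreg _ hpos
      have hsucc : ((d - 1 : ℕ) : ZMod n) + 1 = i₀ := by
        have : (((d - 1) + 1 : ℕ) : ZMod n) = i₀ := by
          rw [show (d - 1) + 1 = d from by omega, hd, zmod_natCast_val]
        push_cast at this
        exact this
      have hdne : ((d - 1 : ℕ) : ZMod n) ≠ i₀ := by
        intro hc
        have hv := congrArg ZMod.val hc
        rw [ZMod.val_natCast, Nat.mod_eq_of_lt (by omega)] at hv
        omega
      have hsub : K.filter (fun h => x ((d - 1 : ℕ) : ZMod n) ∈ G.ends h) ⊆
          {f ((d - 1 : ℕ) : ZMod n)} := by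
        intro h hh
        rw [Finset.mem_filter] at hh
        rcases hchar _ hdne h (hK hh.1) hh.2 with h1 | h1
        · rw [Finset.mem_singleton]; exact h1
        · exfalso
          rw [hsucc] at h1
          rw [h1] at hh
          exact hfi₀notF₂ (hK hh.1)
      have hle := Finset.card_le_card hsub
      rw [Finset.card_singleton] at hle
      rw [degIn] at h2
      omega
    refine ⟨?_, he'K⟩
    · refine hF0 K ?_ hreg he'K
      intro z hz
      have hzF₂ := hK hz
      rcases Finset.mem_insert.mp hzF₂ with rfl | hzF
      · exact absurd hz hgK
      · exact Finset.mem_of_mem_erase hzF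
  · rw [hF₂, Finset.mem_insert]
    right
    refine Finset.mem_erase.mpr ⟨?_, hf0 ▸ hmemF 0⟩
    rw [← hf0]
    intro hc
    exact hi₀ (injf hc).symm
  · rw [hF₂, Finset.card_insert_of_notMem hgerase, Finset.card_erase_of_mem hfi₀F]
    have : 0 < F.card := Finset.card_pos.mpr ⟨f i₀, hfi₀F⟩
    omega

/-- The surgery lemma, arbitrary branch index (uses reversal when `i₀ = 0`). -/
lemma surgery (hl : G.Loopless) {F : Finset G.E} {e' : G.E}
    (hdeg : ∀ v, G.degIn F v ≤ 2)
    (hF0 : ∀ K ⊆ F, G.TwoReg K → e' ∉ K → Even K.card)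
    (n2 : 2 ≤ n) (injf : Function.Injective f) (injx : Function.Injective x)
    (hends : ∀ i, G.ends (f i) = s(x (i - 1), x i))
    (hmemF : ∀ i, f i ∈ F) (hf0 : f 0 = e')
    (i₀ : ZMod n)
    {g : G.E} {y : G.V} (hgF : g ∉ F) (hgne : ∀ j, g ≠ f j)
    (hendsg : G.ends g = s(x i₀, y)) (hyx : ∀ j, y ≠ x j) (hyF : G.degIn F y ≤ 1) :
    ∃ F₂ : Finset G.E, (∀ v, G.degIn F₂ v ≤ 2) ∧
      (∀ K ⊆ F₂, G.TwoReg K → Even K.card ∧ e' ∉ K) ∧ e' ∈ F₂ ∧ F₂.card = F.card := by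
  haveI : NeZero n := ⟨by omega⟩
  by_cases hi₀ : i₀ ≠ 0
  · exact surgery0 hl hdeg hF0 n2 injf injx hends hmemF hf0 hi₀ hgF hgne hendsg hyx hyF
  · push_neg at hi₀
    subst hi₀
    -- reversed enumeration
    set f' : ZMod n → G.E := fun i => f (-i) with hf'
    set x' : ZMod n → G.V := fun i => x (-i - 1) with hx'
    have injf' : Function.Injective f' := fun a b hab => by
      have := injf hab
      have h2 : -(-a) = -(-b) := by rw [this]
      rwa [neg_neg, neg_neg] at h2
    have injx' : Function.Injective x' := fun a b hab => by
      have h1 := injx hab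
      have h2 : -(-a - 1) - 1 = -(-b - 1) - 1 := by rw [h1]
      simpa using h2
    have hends' : ∀ i, G.ends (f' i) = s(x' (i - 1), x' i) := by
      intro i
      rw [hf', hx']
      simp only
      rw [hends (-i)]
      rw [show -(i - 1) - 1 = -i from by ring]
      exact Sym2.eq_swap
    have hmemF' : ∀ i, f' i ∈ F := fun i => hmemF (-i)
    have hf0' : f' 0 = e' := by rw [hf']; simp only [neg_zero]; exact hf0
    have hgne' : ∀ j, g ≠ f' j := fun j => hgne (-j)
    have hyx' : ∀ j, y ≠ x' j := fun j => hyx (-j - 1)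
    have hi₀' : (-1 : ZMod n) ≠ 0 := by
      intro hc
      have : (1 : ZMod n) = 0 := by
        have := congrArg Neg.neg hc
        rwa [neg_neg, neg_zero] at this
      exact zmod_one_ne_zero n2 this
    have hendsg' : G.ends g = s(x' (-1), y) := by
      rw [hx']
      simp only
      rw [show -(-1 : ZMod n) - 1 = 0 from by ring]
      exact hendsg
    exact surgery0 hl hdeg hF0 n2 injf' injx' hends' hmemF' hf0' hi₀' hgF hgne' hendsg' hyx' hyF

end Surgery


/-! ### nu2 of cycles -/

section Cycles

variable {G : Multigraph}

lemma zmod_val_succ_cases {n : ℕ} (n2 : 2 ≤ n) (i : ZMod n) :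
    (haveI : NeZero n := ⟨by omega⟩; (i + 1).val = i.val + 1) ∨
    (haveI : NeZero n := ⟨by omega⟩; (i + 1).val = 0 ∧ i.val + 1 = n) := by
  haveI : NeZero n := ⟨by omega⟩
  haveI : Fact (1 < n) := ⟨by omega⟩
  have h1 : (i + 1).val = (i.val + 1) % n := by
    rw [ZMod.val_add, ZMod.val_one n]
  have hlt : i.val < n := ZMod.val_lt i
  rcases Nat.lt_or_ge (i.val + 1) n with h | h
  · left; rw [h1, Nat.mod_eq_of_lt h]
  · right
    have hin : i.val + 1 = n := by omega
    exact ⟨by rw [h1, hin, Nat.mod_self], hin⟩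

theorem cyc_nu2 (hl : G.Loopless) (hconn : G.Connected) (hreg2 : ∀ v, G.deg v = 2)
    (e₀ : G.E) :
    (Odd (Fintype.card G.E) → G.nu2 = Fintype.card G.E - 1) ∧
    (Even (Fintype.card G.E) → G.nu2 = Fintype.card G.E) := by
  have hKuniv : ∀ v, 0 < G.degIn (Finset.univ : Finset G.E) v →
      G.degIn Finset.univ v = 2 := by
    intro v _
    rw [← deg_eq_degIn_univ hl]
    exact hreg2 v
  obtain ⟨u₀, hu₀⟩ := exists_mem_ends (G := G) e₀
  obtain ⟨n, f, x, n2, injf, injx, hmemK, hf0, hx0, hends, hclosure⟩ :=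
    orbit hl hKuniv (Finset.mem_univ e₀) hu₀
  haveI : NeZero n := ⟨by omega⟩
  have hcardE : Fintype.card G.E = n :=
    (nonbranch hl hconn injf injx n2 hends (fun i => hreg2 (x i))).2
  constructor
  · -- odd case
    intro hodd
    rw [hcardE] at hodd ⊢
    -- upper bound
    have hupper : G.nu2 ≤ n - 1 := by
      refine nu2_le ?_
      intro H H' hH hH' hd
      by_contra hc
      have hcard : (H ∪ H').card = H.card + H'.card := Finset.card_union_of_disjoint hd
      have hle : (H ∪ H').card ≤ n := by
        rw [← hcardE, ← Finset.card_univ]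
        exact Finset.card_le_univ _
      have hEQ : H.card + H'.card = n := by omega
      have huniv : H ∪ H' = Finset.univ := by
        apply Finset.eq_univ_of_card
        rw [hcard, hEQ, hcardE]
      have hgood := good_of_matchings hH hH' hd
      have heven := hgood.2 Finset.univ (by rw [huniv]) (fun v hv => hKuniv v hv)
      rw [Finset.card_univ, hcardE] at heven
      rcases heven with ⟨m, hm⟩
      rcases hodd with ⟨m', hm'⟩
      omega
    -- lower bound
    have hlower : n - 1 ≤ G.nu2 := by
      set H := (Finset.univ.filter (fun i : ZMod n => ¬ Even i.val)).image f with hH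
      set H' := (Finset.univ.filter (fun i : ZMod n => Even i.val ∧ i ≠ 0)).image f with hH'
      have hHm : G.IsMatching H := by
        refine enum_matching_filter hl injf injx hends _ ?_
        intro i hi hcon
        rcases zmod_val_succ_cases n2 i with h1 | ⟨h1, h2⟩
        · rw [h1] at hcon
          exact hcon (Nat.even_add_one.mpr hi)
        · rw [h1] at hcon
          exact hcon Even.zero
      have hH'm : G.IsMatching H' := by
        refine enum_matching_filter hl injf injx hends _ ?_
        rintro i ⟨hi, hi0⟩ ⟨hcon, hcon0⟩
        rcases zmod_val_succ_cases n2 i with h1 | ⟨h1, h2⟩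
        · rw [h1] at hcon
          exact (Nat.even_add_one.mp hcon) hi
        · apply hcon0
          apply ZMod.val_injective
          rw [h1, ZMod.val_zero]
      have hdisj : Disjoint H H' := by
        rw [Finset.disjoint_left]
        intro z hz1 hz2
        obtain ⟨i, hi, rfl⟩ := Finset.mem_image.mp hz1
        obtain ⟨j, hj, hji⟩ := Finset.mem_image.mp hz2
        have hij := injf hji
        subst hij
        exact (Finset.mem_filter.mp hi).2 (Finset.mem_filter.mp hj).2.1
      have hcards : H.card + H'.card = n - 1 := by
        rw [hH, hH', Finset.card_image_of_injective _ injf,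
          Finset.card_image_of_injective _ injf]
        have hB : Finset.univ.filter (fun i : ZMod n => Even i.val ∧ i ≠ 0) =
            (Finset.univ.filter (fun i : ZMod n => Even i.val)).erase 0 := by
          ext i
          rw [Finset.mem_erase, Finset.mem_filter, Finset.mem_filter]
          constructor
          · rintro ⟨_, h1, h2⟩; exact ⟨h2, by constructor <;> [exact Finset.mem_univ i; exact h1]⟩
          · rintro ⟨h1, _, h2⟩; exact ⟨Finset.mem_univ i, h2, h1⟩
        have h0mem : (0 : ZMod n) ∈ Finset.univ.filter (fun i : ZMod n => Even i.val) := by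
          rw [Finset.mem_filter, ZMod.val_zero]
          exact ⟨Finset.mem_univ _, Even.zero⟩
        rw [hB, Finset.card_erase_of_mem h0mem]
        have hpos : 0 < (Finset.univ.filter (fun i : ZMod n => Even i.val)).card :=
          Finset.card_pos.mpr ⟨0, h0mem⟩
        have hsum := Finset.card_filter_add_card_filter_not
          (s := (Finset.univ : Finset (ZMod n))) (p := fun i => Even i.val)
        rw [Finset.card_univ, ZMod.card] at hsum
        omega
      calc n - 1 = H.card + H'.card := hcards.symm
        _ ≤ G.nu2 := le_nu2 hHm hH'm hdisj
    omega
  · -- even case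
    intro heven
    rw [hcardE] at heven ⊢
    have hupper : G.nu2 ≤ n := by
      have := nu2_le_card (G := G)
      rwa [hcardE] at this
    have hlower : n ≤ G.nu2 := by
      set H := (Finset.univ.filter (fun i : ZMod n => ¬ Even i.val)).image f with hH
      set H' := (Finset.univ.filter (fun i : ZMod n => Even i.val)).image f with hH'
      have hHm : G.IsMatching H := by
        refine enum_matching_filter hl injf injx hends _ ?_
        intro i hi hcon
        exact hcon ((zmod_succ_val_parity heven n2 i).mpr hi)
      have hH'm : G.IsMatching H' := by
        refine enum_matching_filter hl injf injx hends _ ?_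
        intro i hi hcon
        exact (zmod_succ_val_parity heven n2 i).mp hcon hi
      have hdisj : Disjoint H H' := by
        rw [Finset.disjoint_left]
        intro z hz1 hz2
        obtain ⟨i, hi, rfl⟩ := Finset.mem_image.mp hz1
        obtain ⟨j, hj, hji⟩ := Finset.mem_image.mp hz2
        have hij := injf hji
        subst hij
        exact (Finset.mem_filter.mp hi).2 (Finset.mem_filter.mp hj).2
      have hcards : H.card + H'.card = n := by
        rw [hH, hH', Finset.card_image_of_injective _ injf,
          Finset.card_image_of_injective _ injf]
        have hsum := Finset.card_filter_add_card_filter_not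
          (s := (Finset.univ : Finset (ZMod n))) (p := fun i => Even i.val)
        rw [Finset.card_univ, ZMod.card] at hsum
        omega
      calc n = H.card + H'.card := hcards.symm
        _ ≤ G.nu2 := le_nu2 hHm hH'm hdisj
    omega

end Cycles


/-! ### Subdivision -/

end Multigraph

instance sumElimDecidablePred {α β : Type} {p : α → Prop} {q : β → Prop}
    [DecidablePred p] [DecidablePred q] : DecidablePred (Sum.elim p q)
  | Sum.inl a => inferInstanceAs (Decidable (p a))
  | Sum.inr b => inferInstanceAs (Decidable (q b))

namespace Multigraph

attribute [reducible] subdivideOnce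

section Subdivision

variable {G : Multigraph} {e : G.E} {u v : G.V}

lemma mem_map_inl {a : G.V} {q : Sym2 G.V} :
    (Sum.inl a : G.V ⊕ Unit) ∈ q.map Sum.inl ↔ a ∈ q := by
  rw [Sym2.mem_map]
  constructor
  · rintro ⟨b, hb, hba⟩
    exact Sum.inl_injective hba ▸ hb
  · intro h; exact ⟨a, h, rfl⟩

lemma not_inr_mem_map_inl {b : Unit} {q : Sym2 G.V} :
    (Sum.inr b : G.V ⊕ Unit) ∉ q.map Sum.inl := by
  rw [Sym2.mem_map]
  rintro ⟨a, _, hc⟩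
  cases hc

lemma sub_ends_inl (f : G.E) (hf : f ≠ e) :
    (G.subdivideOnce e u v).ends (Sum.inl ⟨f, hf⟩) = (G.ends f).map Sum.inl := rfl

lemma sub_ends_true :
    (G.subdivideOnce e u v).ends (Sum.inr true) = s(Sum.inl u, Sum.inr ()) := rfl

lemma sub_ends_false :
    (G.subdivideOnce e u v).ends (Sum.inr false) = s(Sum.inl v, Sum.inr ()) := rfl

lemma sub_loopless (hl : G.Loopless) : (G.subdivideOnce e u v).Loopless := by
  intro k hk
  match k with
  | Sum.inl ⟨f, hf⟩ =>
      apply hl f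
      obtain ⟨a, b, hab⟩ := sym2_exists (G.ends f)
      have : ((G.subdivideOnce e u v).ends (Sum.inl ⟨f, hf⟩)).IsDiag := hk
      rw [sub_ends_inl, hab, Sym2.map_pair_eq, Sym2.mk_isDiag_iff] at this
      show (G.ends f).IsDiag
      rw [hab, Sym2.mk_isDiag_iff]
      exact Sum.inl_injective this
  | Sum.inr true =>
      have : ((G.subdivideOnce e u v).ends (Sum.inr true)).IsDiag := hk
      rw [sub_ends_true, Sym2.mk_isDiag_iff] at this
      cases this
  | Sum.inr false =>
      have : ((G.subdivideOnce e u v).ends (Sum.inr false)).IsDiag := hk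
      rw [sub_ends_false, Sym2.mk_isDiag_iff] at this
      cases this

lemma sub_card_edges :
    Fintype.card (G.subdivideOnce e u v).E = Fintype.card G.E + 1 := by
  show Fintype.card ({f : G.E // f ≠ e} ⊕ Bool) = _
  rw [Fintype.card_sum, Fintype.card_bool]
  have h1 : Fintype.card {f : G.E // f ≠ e} = Fintype.card G.E - 1 := by
    rw [Fintype.card_subtype_compl, Fintype.card_subtype_eq]
  have h2 : 1 ≤ Fintype.card G.E := by
    have : Nonempty G.E := ⟨e⟩
    exact Fintype.card_pos
  omega

lemma sub_connected (hl : G.Loopless) (hconn : G.Connected) (he : G.ends e = s(u, v)) :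
    (G.subdivideOnce e u v).Connected := by
  set G' := G.subdivideOnce e u v with hG'
  have hwu : G'.Adj (Sum.inr ()) (Sum.inl u) :=
    ⟨Sum.inr true, (sub_ends_true).trans Sym2.eq_swap⟩
  have huw : G'.Adj (Sum.inl u) (Sum.inr ()) := ⟨Sum.inr true, sub_ends_true⟩
  have hwv : G'.Adj (Sum.inr ()) (Sum.inl v) :=
    ⟨Sum.inr false, (sub_ends_false).trans Sym2.eq_swap⟩
  have hvw : G'.Adj (Sum.inl v) (Sum.inr ()) := ⟨Sum.inr false, sub_ends_false⟩
  have hadj : ∀ a b : G.V, G.Adj a b →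
      Relation.ReflTransGen G'.Adj (Sum.inl a) (Sum.inl b) := by
    intro a b ⟨f, hf⟩
    by_cases hfe : f = e
    · subst hfe
      rw [he] at hf
      rcases Sym2.eq_iff.mp hf with ⟨rfl, rfl⟩ | ⟨rfl, rfl⟩
      · exact Relation.ReflTransGen.trans (Relation.ReflTransGen.single huw)
          (Relation.ReflTransGen.single hwv)
      · exact Relation.ReflTransGen.trans (Relation.ReflTransGen.single hvw)
          (Relation.ReflTransGen.single hwu)
    · refine Relation.ReflTransGen.single ⟨Sum.inl ⟨f, hfe⟩, ?_⟩
      rw [sub_ends_inl, hf, Sym2.map_pair_eq]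
  have hlift : ∀ a b : G.V, Relation.ReflTransGen G.Adj a b →
      Relation.ReflTransGen G'.Adj (Sum.inl a) (Sum.inl b) := by
    intro a b h
    induction h with
    | refl => exact Relation.ReflTransGen.refl
    | tail _ hbc ih => exact Relation.ReflTransGen.trans ih (hadj _ _ hbc)
  intro p q
  match p, q with
  | Sum.inl a, Sum.inl b => exact hlift a b (hconn a b)
  | Sum.inl a, Sum.inr () =>
      exact Relation.ReflTransGen.trans (hlift a u (hconn a u)) (Relation.ReflTransGen.single huw)
  | Sum.inr (), Sum.inl b =>
      exact Relation.ReflTransGen.trans (Relation.ReflTransGen.single hwu) (hlift u b (hconn u b))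
  | Sum.inr (), Sum.inr () => exact Relation.ReflTransGen.refl

end Subdivision


section LiftProj

variable {G : Multigraph} {e : G.E} {u v : G.V}

/-- Lift a set of edges avoiding `e` into the subdivision. -/
def edgeLift (e : G.E) (u v : G.V) (K : Finset G.E) : Finset (G.subdivideOnce e u v).E :=
  Finset.univ.filter (Sum.elim (fun f : {f : G.E // f ≠ e} => f.1 ∈ K) (fun _ : Bool => False))

/-- The pair of new edges at the subdivision vertex. -/
def wpair (G : Multigraph) (e : G.E) (u v : G.V) : Finset (G.subdivideOnce e u v).E :=
  {Sum.inr true, Sum.inr false}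

/-- Underlying edge map. -/
def eproj (G : Multigraph) (e : G.E) (u v : G.V) : (G.subdivideOnce e u v).E → G.E :=
  Sum.elim Subtype.val (fun _ => e)

/-- Project a set of edges of the subdivision back to `G`; `e` is included iff both new
edges are present. -/
def edgeProj (e : G.E) (u v : G.V) (K' : Finset (G.subdivideOnce e u v).E) : Finset G.E :=
  ((K' \ G.wpair e u v).image (G.eproj e u v)) ∪
    (if Sum.inr true ∈ K' ∧ Sum.inr false ∈ K' then {e} else ∅)

lemma mem_wpair {k' : (G.subdivideOnce e u v).E} :
    k' ∈ G.wpair e u v ↔ (k' = Sum.inr true ∨ k' = Sum.inr false) := by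
  rw [wpair, Finset.mem_insert, Finset.mem_singleton]

lemma inr_mem_wpair (b : Bool) : (Sum.inr b : (G.subdivideOnce e u v).E) ∈ G.wpair e u v := by
  rw [mem_wpair]
  cases b
  · right; rfl
  · left; rfl

lemma inl_not_mem_wpair (f : {f : G.E // f ≠ e}) :
    (Sum.inl f : (G.subdivideOnce e u v).E) ∉ G.wpair e u v := by
  rw [mem_wpair]
  rintro (hc | hc) <;> cases hc

lemma mem_lift_inl {K : Finset G.E} {f : G.E} {hf : f ≠ e} :
    (Sum.inl ⟨f, hf⟩ : (G.subdivideOnce e u v).E) ∈ edgeLift e u v K ↔ f ∈ K := by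
  rw [edgeLift, Finset.mem_filter]
  simp

lemma not_mem_lift_inr {K : Finset G.E} (b : Bool) :
    (Sum.inr b : (G.subdivideOnce e u v).E) ∉ edgeLift e u v K := by
  rw [edgeLift, Finset.mem_filter]
  simp

lemma mem_proj_ne {K' : Finset (G.subdivideOnce e u v).E} {k : G.E} (h : k ≠ e) :
    k ∈ edgeProj e u v K' ↔ (Sum.inl ⟨k, h⟩ : (G.subdivideOnce e u v).E) ∈ K' := by
  rw [edgeProj, Finset.mem_union]
  constructor
  · rintro (hk | hk)
    · obtain ⟨k', hk', hθ⟩ := Finset.mem_image.mp hk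
      match k' with
      | Sum.inl f =>
        have hf : f.1 = k := hθ
        have : (Sum.inl f : (G.subdivideOnce e u v).E) = Sum.inl ⟨k, h⟩ := by
          congr 1
          exact Subtype.ext hf
        rw [← this]
        exact (Finset.mem_sdiff.mp hk').1
      | Sum.inr b =>
        exact absurd hθ h.symm  -- eproj (inr b) = e = k contradicts k ≠ e
    · exfalso
      by_cases hc : Sum.inr true ∈ K' ∧ Sum.inr false ∈ K'
      · rw [if_pos hc, Finset.mem_singleton] at hk
        exact h hk
      · rw [if_neg hc] at hk
        exact Finset.notMem_empty _ hk
  · intro hk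
    left
    refine Finset.mem_image.mpr ⟨Sum.inl ⟨k, h⟩, ?_, rfl⟩
    exact Finset.mem_sdiff.mpr ⟨hk, inl_not_mem_wpair _⟩

lemma mem_proj_e {K' : Finset (G.subdivideOnce e u v).E} :
    e ∈ edgeProj e u v K' ↔ (Sum.inr true ∈ K' ∧ Sum.inr false ∈ K') := by
  rw [edgeProj, Finset.mem_union]
  constructor
  · rintro (hk | hk)
    · exfalso
      obtain ⟨k', hk', hθ⟩ := Finset.mem_image.mp hk
      match k' with
      | Sum.inl f => exact f.2 hθ
      | Sum.inr b => exact (Finset.mem_sdiff.mp hk').2 (inr_mem_wpair b)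
    · by_cases hc : Sum.inr true ∈ K' ∧ Sum.inr false ∈ K'
      · exact hc
      · rw [if_neg hc] at hk
        exact absurd hk (Finset.notMem_empty _)
  · intro hc
    right
    rw [if_pos hc]
    exact Finset.mem_singleton_self e

lemma proj_lift {K : Finset G.E} (hKe : e ∉ K) : edgeProj e u v (edgeLift e u v K) = K := by
  ext k
  by_cases h : k = e
  · subst h
    rw [mem_proj_e]
    constructor
    · rintro ⟨hc, _⟩; exact absurd hc (not_mem_lift_inr true)
    · intro hc; exact absurd hc hKe
  · rw [mem_proj_ne h, mem_lift_inl]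

lemma card_lift {K : Finset G.E} (hKe : e ∉ K) : (edgeLift e u v K).card = K.card := by
  symm
  refine Finset.card_bij (fun k hk => Sum.inl ⟨k, fun hc => hKe (by rw [← hc]; exact hk)⟩) ?_ ?_ ?_
  · intro k hk
    exact (mem_lift_inl).mpr hk
  · intro a ha b hb hab
    have h1 := Sum.inl_injective hab
    exact congrArg Subtype.val h1
  · intro k' hk'
    match k' with
    | Sum.inl f =>
      have hf1 : f.1 ∈ K := by
        have : (Sum.inl ⟨f.1, f.2⟩ : (G.subdivideOnce e u v).E) ∈ edgeLift e u v K := hk'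
        exact (mem_lift_inl).mp this
      exact ⟨f.1, hf1, by congr 1⟩
    | Sum.inr b => exact absurd hk' (not_mem_lift_inr b)

lemma degIn_w {K' : Finset (G.subdivideOnce e u v).E} :
    (G.subdivideOnce e u v).degIn K' (Sum.inr ()) = (K' ∩ G.wpair e u v).card := by
  rw [degIn]
  congr 1
  ext k'
  rw [Finset.mem_filter, Finset.mem_inter, mem_wpair]
  match k' with
  | Sum.inl f =>
    constructor
    · rintro ⟨_, hmem⟩
      exact absurd hmem (not_inr_mem_map_inl)
    · rintro ⟨_, hc | hc⟩ <;> cases hc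
  | Sum.inr true =>
    constructor
    · rintro ⟨h, _⟩; exact ⟨h, Or.inl rfl⟩
    · rintro ⟨h, _⟩
      refine ⟨h, ?_⟩
      rw [sub_ends_true]
      exact Sym2.mem_mk_right _ _
  | Sum.inr false =>
    constructor
    · rintro ⟨h, _⟩; exact ⟨h, Or.inr rfl⟩
    · rintro ⟨h, _⟩
      refine ⟨h, ?_⟩
      rw [sub_ends_false]
      exact Sym2.mem_mk_right _ _

lemma degIn_lift_w {K : Finset G.E} :
    (G.subdivideOnce e u v).degIn (edgeLift e u v K) (Sum.inr ()) = 0 := by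
  rw [degIn_w, Finset.card_eq_zero]
  ext k'
  rw [Finset.mem_inter, mem_wpair]
  simp only [Finset.notMem_empty, iff_false]
  rintro ⟨h1, h2 | h2⟩ <;> (subst h2; exact not_mem_lift_inr _ h1)

end LiftProj


section DegTransfer

variable {G : Multigraph} {e : G.E} {u v : G.V}

lemma sub_ends_inl' (f : {f : G.E // f ≠ e}) :
    (G.subdivideOnce e u v).ends (Sum.inl f) = (G.ends f.1).map Sum.inl := rfl

lemma inl_mem_true {z : G.V} :
    (Sum.inl z : (G.subdivideOnce e u v).V) ∈ (G.subdivideOnce e u v).ends (Sum.inr true) ↔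
      z = u := by
  rw [sub_ends_true, Sym2.mem_iff]
  constructor
  · rintro (h | h)
    · exact Sum.inl_injective h
    · exact absurd h (by simp)
  · rintro rfl; exact Or.inl rfl

lemma inl_mem_false {z : G.V} :
    (Sum.inl z : (G.subdivideOnce e u v).V) ∈ (G.subdivideOnce e u v).ends (Sum.inr false) ↔
      z = v := by
  rw [sub_ends_false, Sym2.mem_iff]
  constructor
  · rintro (h | h)
    · exact Sum.inl_injective h
    · exact absurd h (by simp)
  · rintro rfl; exact Or.inl rfl

lemma degproj_le (he : G.ends e = s(u, v)) {K' : Finset (G.subdivideOnce e u v).E}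
    (z : G.V) :
    G.degIn (edgeProj e u v K') z ≤ (G.subdivideOnce e u v).degIn K' (Sum.inl z) := by
  rw [degIn, degIn]
  refine Finset.card_le_card_of_injOn
    (fun k => if h : k = e then (if z = u then Sum.inr true else Sum.inr false)
      else Sum.inl ⟨k, h⟩) ?_ ?_
  · intro k hk
    rw [Finset.mem_coe, Finset.mem_filter] at hk ⊢
    beta_reduce
    by_cases h : k = e
    · subst h
      have hboth := (mem_proj_e).mp hk.1
      have hz : z = u ∨ z = v := by
        have := hk.2
        rw [he, Sym2.mem_iff] at this
        exact this
      rw [dif_pos rfl]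
      by_cases hzu : z = u
      · rw [if_pos hzu]
        exact ⟨hboth.1, inl_mem_true.mpr hzu⟩
      · rw [if_neg hzu]
        have hzv : z = v := hz.resolve_left hzu
        exact ⟨hboth.2, inl_mem_false.mpr hzv⟩
    · rw [dif_neg h]
      refine ⟨(mem_proj_ne h).mp hk.1, ?_⟩
      rw [sub_ends_inl]
      exact mem_map_inl.mpr hk.2
  · intro a ha b hb hab
    simp only at hab
    by_cases h1 : a = e <;> by_cases h2 : b = e
    · rw [h1, h2]
    · rw [dif_pos h1, dif_neg h2] at hab
      split at hab <;> exact absurd hab.symm (by simp)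
    · rw [dif_neg h1, dif_pos h2] at hab
      split at hab <;> exact absurd hab (by simp)
    · rw [dif_neg h1, dif_neg h2] at hab
      have := Sum.inl_injective hab
      exact congrArg Subtype.val this

lemma degproj_eq (huv : u ≠ v) (he : G.ends e = s(u, v))
    {K' : Finset (G.subdivideOnce e u v).E}
    (hbal : (Sum.inr true ∈ K') ↔ (Sum.inr false ∈ K')) (z : G.V) :
    G.degIn (edgeProj e u v K') z = (G.subdivideOnce e u v).degIn K' (Sum.inl z) := by
  refine le_antisymm (degproj_le he z) ?_
  rw [degIn, degIn]
  refine Finset.card_le_card_of_injOn (G.eproj e u v) ?_ ?_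
  · intro k' hk'
    rw [Finset.mem_coe, Finset.mem_filter] at hk' ⊢
    match k' with
    | Sum.inl f =>
      refine ⟨(mem_proj_ne f.2).mpr ?_, ?_⟩
      · exact hk'.1
      · show z ∈ G.ends f.1
        have := hk'.2
        rw [sub_ends_inl'] at this
        exact mem_map_inl.mp this
    | Sum.inr true =>
      have hzu : z = u := inl_mem_true.mp hk'.2
      refine ⟨(mem_proj_e).mpr ⟨hk'.1, hbal.mp hk'.1⟩, ?_⟩
      show z ∈ G.ends e
      rw [he, hzu]
      exact Sym2.mem_mk_left _ _
    | Sum.inr false =>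
      have hzv : z = v := inl_mem_false.mp hk'.2
      refine ⟨(mem_proj_e).mpr ⟨hbal.mpr hk'.1, hk'.1⟩, ?_⟩
      show z ∈ G.ends e
      rw [he, hzv]
      exact Sym2.mem_mk_right _ _
  · intro a ha b hb hab
    rw [Finset.mem_coe, Finset.mem_filter] at ha hb
    match a, b with
    | Sum.inl f, Sum.inl f' =>
      have : f.1 = f'.1 := hab
      rw [Subtype.ext this]
    | Sum.inl f, Sum.inr b' =>
      exact absurd (hab : f.1 = e) f.2
    | Sum.inr b', Sum.inl f =>
      exact absurd (hab.symm : f.1 = e) f.2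
    | Sum.inr true, Sum.inr true => rfl
    | Sum.inr false, Sum.inr false => rfl
    | Sum.inr true, Sum.inr false =>
      exact absurd ((inl_mem_true.mp ha.2).symm.trans (inl_mem_false.mp hb.2)) huv
    | Sum.inr false, Sum.inr true =>
      exact absurd ((inl_mem_true.mp hb.2).symm.trans (inl_mem_false.mp ha.2)) huv

lemma deglift_eq (huv : u ≠ v) (he : G.ends e = s(u, v)) {K : Finset G.E} (hKe : e ∉ K)
    (z : G.V) :
    (G.subdivideOnce e u v).degIn (edgeLift e u v K) (Sum.inl z) = G.degIn K z := by
  have hbal : (Sum.inr true ∈ edgeLift e u v K) ↔ (Sum.inr false ∈ edgeLift e u v K) := by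
    constructor <;> (intro hc; exact absurd hc (not_mem_lift_inr _))
  rw [← degproj_eq huv he hbal z, proj_lift hKe]

lemma twoReg_lift (huv : u ≠ v) (he : G.ends e = s(u, v)) {K : Finset G.E} (hKe : e ∉ K)
    (hreg : G.TwoReg K) : (G.subdivideOnce e u v).TwoReg (edgeLift e u v K) := by
  intro p hp
  match p with
  | Sum.inl z =>
    rw [deglift_eq huv he hKe] at hp ⊢
    exact hreg z hp
  | Sum.inr () =>
    rw [degIn_lift_w] at hp
    omega

lemma proj_univ : edgeProj e u v (Finset.univ : Finset (G.subdivideOnce e u v).E) =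
    Finset.univ := by
  ext k
  simp only [Finset.mem_univ, iff_true]
  by_cases h : k = e
  · subst h
    exact (mem_proj_e).mpr ⟨Finset.mem_univ _, Finset.mem_univ _⟩
  · exact (mem_proj_ne h).mpr (Finset.mem_univ _)

lemma sub_deg_inl (hl : G.Loopless) (huv : u ≠ v) (he : G.ends e = s(u, v)) (z : G.V) :
    (G.subdivideOnce e u v).deg (Sum.inl z) = G.deg z := by
  rw [deg_eq_degIn_univ (sub_loopless hl), deg_eq_degIn_univ hl]
  rw [← degproj_eq huv he (by constructor <;> (intro _; exact Finset.mem_univ _)) z, proj_univ]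

lemma sub_deg_w (hl : G.Loopless) :
    (G.subdivideOnce e u v).deg (Sum.inr ()) = 2 := by
  rw [deg_eq_degIn_univ (sub_loopless hl), degIn_w]
  rw [Finset.univ_inter]
  rw [wpair, Finset.card_insert_of_notMem (by
    rw [Finset.mem_singleton]
    intro hc
    exact Bool.noConfusion (Sum.inr_injective hc)), Finset.card_singleton]

end DegTransfer


section ProjCards

variable {G : Multigraph} {e : G.E} {u v : G.V}

lemma sdiff_wpair_no_inr {K' : Finset (G.subdivideOnce e u v).E} (b : Bool) :
    (Sum.inr b : (G.subdivideOnce e u v).E) ∉ K' \ G.wpair e u v := by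
  rw [Finset.mem_sdiff]
  rintro ⟨_, hc⟩
  exact hc (inr_mem_wpair b)

lemma card_image_eproj {K' : Finset (G.subdivideOnce e u v).E} :
    ((K' \ G.wpair e u v).image (G.eproj e u v)).card = (K' \ G.wpair e u v).card := by
  apply Finset.card_image_of_injOn
  intro a ha b hb hab
  match a, b with
  | Sum.inl f, Sum.inl f' =>
    have : f.1 = f'.1 := hab
    rw [Subtype.ext this]
  | Sum.inl f, Sum.inr b' => exact absurd hb (sdiff_wpair_no_inr b')
  | Sum.inr b', _ => exact absurd ha (sdiff_wpair_no_inr b')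

lemma e_not_mem_image_eproj {K' : Finset (G.subdivideOnce e u v).E} :
    e ∉ (K' \ G.wpair e u v).image (G.eproj e u v) := by
  intro hc
  obtain ⟨k', hk', hθ⟩ := Finset.mem_image.mp hc
  match k' with
  | Sum.inl f => exact f.2 hθ
  | Sum.inr b => exact absurd hk' (sdiff_wpair_no_inr b)

lemma card_wpair : (G.wpair e u v).card = 2 := by
  rw [wpair, Finset.card_insert_of_notMem (by
    rw [Finset.mem_singleton]
    intro hc
    exact Bool.noConfusion (Sum.inr_injective hc)), Finset.card_singleton]

lemma card_proj_both {K' : Finset (G.subdivideOnce e u v).E}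
    (hboth : Sum.inr true ∈ K' ∧ Sum.inr false ∈ K') :
    (edgeProj e u v K').card = K'.card - 1 := by
  rw [edgeProj, if_pos hboth]
  rw [Finset.card_union_of_disjoint (by
    rw [Finset.disjoint_singleton_right]
    exact e_not_mem_image_eproj)]
  rw [card_image_eproj, Finset.card_singleton]
  have hsub : G.wpair e u v ⊆ K' := by
    intro k hk
    rcases mem_wpair.mp hk with rfl | rfl
    · exact hboth.1
    · exact hboth.2
  rw [Finset.card_sdiff_of_subset hsub, card_wpair]
  have h2 : 2 ≤ K'.card := by
    have := Finset.card_le_card hsub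
    rw [card_wpair] at this
    exact this
  omega

lemma card_proj_ge {K' : Finset (G.subdivideOnce e u v).E} :
    K'.card ≤ (edgeProj e u v K').card + 1 := by
  by_cases hboth : Sum.inr true ∈ K' ∧ Sum.inr false ∈ K'
  · rw [card_proj_both hboth]
    have : 1 ≤ K'.card := Finset.card_pos.mpr ⟨_, hboth.1⟩
    omega
  · rw [edgeProj, if_neg hboth, Finset.union_empty, card_image_eproj]
    have hinter : (K' ∩ G.wpair e u v).card ≤ 1 := by
      by_contra hc
      have h2 : (K' ∩ G.wpair e u v).card = 2 := by
        have := Finset.card_le_card (Finset.inter_subset_right : K' ∩ G.wpair e u v ⊆ _)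
        rw [card_wpair] at this
        omega
      have heq : K' ∩ G.wpair e u v = G.wpair e u v :=
        Finset.eq_of_subset_of_card_le Finset.inter_subset_right (by rw [card_wpair, h2])
      apply hboth
      constructor
      · have : Sum.inr true ∈ K' ∩ G.wpair e u v := by rw [heq]; exact inr_mem_wpair true
        exact (Finset.mem_inter.mp this).1
      · have : Sum.inr false ∈ K' ∩ G.wpair e u v := by rw [heq]; exact inr_mem_wpair false
        exact (Finset.mem_inter.mp this).1
    have := Finset.card_sdiff_add_card_inter K' (G.wpair e u v)
    omega

lemma card_proj_noinr {K' : Finset (G.subdivideOnce e u v).E}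
    (hno : ∀ b : Bool, Sum.inr b ∉ K') : (edgeProj e u v K').card = K'.card := by
  have hsd : K' \ G.wpair e u v = K' := by
    ext k
    rw [Finset.mem_sdiff]
    constructor
    · exact fun h => h.1
    · intro h
      refine ⟨h, ?_⟩
      intro hc
      rcases mem_wpair.mp hc with rfl | rfl
      · exact hno true h
      · exact hno false h
  rw [edgeProj, if_neg (fun hc => hno true hc.1), Finset.union_empty, card_image_eproj, hsd]

lemma twoReg_w_balance {K' : Finset (G.subdivideOnce e u v).E}
    (hreg : (G.subdivideOnce e u v).TwoReg K') :
    (Sum.inr true ∈ K') ↔ (Sum.inr false ∈ K') := by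
  have hkey : ∀ b : Bool, Sum.inr b ∈ K' → (Sum.inr (!b) : (G.subdivideOnce e u v).E) ∈ K' := by
    intro b hb
    by_contra hnb
    have hinter : K' ∩ G.wpair e u v = {Sum.inr b} := by
      ext k
      rw [Finset.mem_inter, Finset.mem_singleton]
      constructor
      · rintro ⟨hk1, hk2⟩
        rcases mem_wpair.mp hk2 with rfl | rfl
        · cases b
          · exact absurd hk1 (by simpa using hnb)
          · rfl
        · cases b
          · rfl
          · exact absurd hk1 (by simpa using hnb)
      · rintro rfl
        exact ⟨hb, inr_mem_wpair b⟩
    have hpos : 0 < (G.subdivideOnce e u v).degIn K' (Sum.inr ()) := by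
      rw [degIn_w, hinter, Finset.card_singleton]
      omega
    have h2 := hreg _ hpos
    rw [degIn_w, hinter, Finset.card_singleton] at h2
    omega
  constructor
  · intro h; exact hkey true h
  · intro h; exact hkey false h

lemma proj_mono {K' L' : Finset (G.subdivideOnce e u v).E} (h : K' ⊆ L') :
    edgeProj e u v K' ⊆ edgeProj e u v L' := by
  intro k hk
  by_cases hke : k = e
  · subst hke
    have := mem_proj_e.mp hk
    exact mem_proj_e.mpr ⟨h this.1, h this.2⟩
  · exact (mem_proj_ne hke).mpr (h ((mem_proj_ne hke).mp hk))

end ProjCards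


section MainBounds

variable {G : Multigraph} {e : G.E} {u v : G.V}

/-- Lower-bound construction: a good set through `e` with no cycle through `e`
subdivides to a good set with one more edge. -/
lemma nu2_sub_ge (hl : G.Loopless) (huv : u ≠ v) (he : G.ends e = s(u, v))
    {F₂ : Finset G.E} (hdeg : ∀ z, G.degIn F₂ z ≤ 2)
    (hev : ∀ K ⊆ F₂, G.TwoReg K → Even K.card)
    (heF₂ : e ∈ F₂) (hnoK : ∀ K ⊆ F₂, G.TwoReg K → e ∉ K) :
    F₂.card + 1 ≤ (G.subdivideOnce e u v).nu2 := by
  set F' := edgeLift e u v (F₂.erase e) ∪ G.wpair e u v with hF'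
  have htrue : (Sum.inr true : (G.subdivideOnce e u v).E) ∈ F' :=
    Finset.mem_union_right _ (inr_mem_wpair true)
  have hfalse : (Sum.inr false : (G.subdivideOnce e u v).E) ∈ F' :=
    Finset.mem_union_right _ (inr_mem_wpair false)
  have hproj : edgeProj e u v F' = F₂ := by
    ext k
    by_cases hke : k = e
    · subst hke
      rw [mem_proj_e]
      constructor
      · intro _; exact heF₂
      · intro _; exact ⟨htrue, hfalse⟩
    · rw [mem_proj_ne hke, hF', Finset.mem_union, mem_lift_inl, Finset.mem_erase]
      constructor
      · rintro (h | h)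
        · exact h.2
        · exact absurd h (inl_not_mem_wpair _)
      · intro h
        exact Or.inl ⟨hke, h⟩
  have hbal : ((Sum.inr true : (G.subdivideOnce e u v).E) ∈ F') ↔ (Sum.inr false ∈ F') :=
    iff_of_true htrue hfalse
  have hgood : (G.subdivideOnce e u v).Good F' := by
    constructor
    · intro p
      match p with
      | Sum.inl z =>
        rw [← degproj_eq huv he hbal z, hproj]
        exact hdeg z
      | Sum.inr () =>
        rw [degIn_w]
        have hinter : F' ∩ G.wpair e u v = G.wpair e u v :=
          Finset.inter_eq_right.mpr Finset.subset_union_right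
        rw [hinter, card_wpair]
    · intro K' hK' hreg
      have hbalK := twoReg_w_balance hreg
      have hKF₂ : edgeProj e u v K' ⊆ F₂ := by
        rw [← hproj]; exact proj_mono hK'
      have hKreg : G.TwoReg (edgeProj e u v K') := by
        intro z hz
        rw [degproj_eq huv he hbalK z] at hz ⊢
        exact hreg _ hz
      have heK : e ∉ edgeProj e u v K' := hnoK _ hKF₂ hKreg
      have hnoinr : ∀ b : Bool, (Sum.inr b : (G.subdivideOnce e u v).E) ∉ K' := by
        intro b hb
        apply heK
        rw [mem_proj_e]
        cases b
        · exact ⟨hbalK.mpr hb, hb⟩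
        · exact ⟨hb, hbalK.mp hb⟩
      have hcards := card_proj_noinr hnoinr
      have := hev _ hKF₂ hKreg
      rwa [hcards] at this
  have hcard : F'.card = F₂.card + 1 := by
    rw [hF', Finset.card_union_of_disjoint (by
      rw [Finset.disjoint_right]
      intro k hk
      rcases mem_wpair.mp hk with rfl | rfl <;> exact not_mem_lift_inr _),
      card_lift (Finset.notMem_erase e F₂), Finset.card_erase_of_mem heF₂, card_wpair]
    have : 1 ≤ F₂.card := Finset.card_pos.mpr ⟨e, heF₂⟩
    omega
  have hle := hgood.card_le_nu2 (sub_loopless hl)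
  rw [hcard] at hle
  exact hle

/-- Repair a good-away-from-`e` set through `e` into a genuinely good set through `e`
with no cycle through `e`. -/
lemma fix_core (hl : G.Loopless) (hconn : G.Connected) (hδ : ∀ z, 2 ≤ G.deg z)
    (hnotEvenCycle : ¬ ((∀ z : G.V, G.deg z = 2) ∧ Even (Fintype.card G.E)))
    (hnotOddCycle : ¬ ((∀ z : G.V, G.deg z = 2) ∧ Odd (Fintype.card G.E)))
    (hedge : ∀ g : G.E, ∀ a b : G.V, G.ends g = s(a, b) → ¬ (3 ≤ G.deg a ∧ 3 ≤ G.deg b))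
    (hue : u ∈ G.ends e)
    {F₂ : Finset G.E} (hdeg : ∀ z, G.degIn F₂ z ≤ 2)
    (hF0 : ∀ K ⊆ F₂, G.TwoReg K → e ∉ K → Even K.card) (he₂ : e ∈ F₂) :
    ∃ F₃ : Finset G.E, G.Good F₃ ∧ e ∈ F₃ ∧ (∀ K ⊆ F₃, G.TwoReg K → e ∉ K) ∧
      F₃.card = F₂.card := by
  by_cases hcyc : ∃ K ⊆ F₂, G.TwoReg K ∧ e ∈ K
  · obtain ⟨K, hKsub, hKreg, heK⟩ := hcyc
    obtain ⟨n, f, x, n2, injf, injx, hmem, hf0, hx0, hends, hclosure⟩ :=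
      orbit hl hKreg heK hue
    have hmemF₂ : ∀ i, f i ∈ F₂ := fun i => hKsub (hmem i)
    have hbranch : ∃ i₀, 3 ≤ G.deg (x i₀) := by
      by_contra hno
      push_neg at hno
      have hdeg2 : ∀ i, G.deg (x i) = 2 := by
        intro i
        have h1 := hδ (x i)
        have h2 := hno i
        omega
      obtain ⟨hreg2, hcardE⟩ := nonbranch hl hconn injf injx n2 hends hdeg2
      rcases Nat.even_or_odd (Fintype.card G.E) with h | h
      · exact hnotEvenCycle ⟨hreg2, h⟩
      · exact hnotOddCycle ⟨hreg2, h⟩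
    obtain ⟨i₀, h3⟩ := hbranch
    obtain ⟨g, y, hgF, hgne, hendsg, hyx, hyF⟩ :=
      branch_edge hl hedge hdeg hmemF₂ injf injx n2 hends h3
    obtain ⟨F₃, h1, h2, h3', h4⟩ :=
      surgery hl hdeg hF0 n2 injf injx hends hmemF₂ hf0 i₀ hgF hgne hendsg hyx hyF
    exact ⟨F₃, ⟨h1, fun K hK hreg => (h2 K hK hreg).1⟩, h3',
      fun K hK hreg => (h2 K hK hreg).2, h4⟩
  · push_neg at hcyc
    refine ⟨F₂, ⟨hdeg, ?_⟩, he₂, ?_, rfl⟩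
    · intro K hK hreg
      exact hF0 K hK hreg (hcyc K hK hreg)
    · exact fun K hK hreg => hcyc K hK hreg

/-- Lower bound, assuming `deg u = 2`. -/
lemma lower2 (hl : G.Loopless) (hconn : G.Connected) (hδ : ∀ z, 2 ≤ G.deg z)
    (hnotEvenCycle : ¬ ((∀ z : G.V, G.deg z = 2) ∧ Even (Fintype.card G.E)))
    (hnotOddCycle : ¬ ((∀ z : G.V, G.deg z = 2) ∧ Odd (Fintype.card G.E)))
    (hedge : ∀ g : G.E, ∀ a b : G.V, G.ends g = s(a, b) → ¬ (3 ≤ G.deg a ∧ 3 ≤ G.deg b))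
    (he : G.ends e = s(u, v)) (hdegu : G.deg u = 2) :
    G.nu2 + 1 ≤ (G.subdivideOnce e u v).nu2 := by
  have huv : u ≠ v := by
    intro hc
    apply hl e
    show (G.ends e).IsDiag
    rw [he, hc]
    exact Sym2.mk_isDiag_iff.mpr rfl
  have hue : u ∈ G.ends e := by rw [he]; exact Sym2.mem_mk_left _ _
  obtain ⟨F, hFgood, hFcard⟩ := exists_good_nu2 (G := G)
  have finish : ∀ (F₂ : Finset G.E), (∀ z, G.degIn F₂ z ≤ 2) →
      (∀ K ⊆ F₂, G.TwoReg K → e ∉ K → Even K.card) → e ∈ F₂ →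
      F₂.card + 1 ≤ (G.subdivideOnce e u v).nu2 := by
    intro F₂ hdeg hF0 he₂
    obtain ⟨F₃, hGood, heF₃, hnoK, hcard⟩ :=
      fix_core hl hconn hδ hnotEvenCycle hnotOddCycle hedge hue hdeg hF0 he₂
    rw [← hcard]
    exact nu2_sub_ge hl huv he hGood.1 hGood.2 heF₃ hnoK
  by_cases heF : e ∈ F
  · have := finish F hFgood.1 (fun K hK hreg _ => hFgood.2 K hK hreg) heF
    omega
  · have huF : G.degIn F u ≤ 1 := by
      have hsub : F.filter (fun k => u ∈ G.ends k) ⊆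
          (Finset.univ.filter (fun k => u ∈ G.ends k)).erase e := by
        intro k hk
        rw [Finset.mem_filter] at hk
        exact Finset.mem_erase.mpr ⟨fun hc => heF (hc ▸ hk.1),
          Finset.mem_filter.mpr ⟨Finset.mem_univ _, hk.2⟩⟩
      have hle := Finset.card_le_card hsub
      have hemem : e ∈ Finset.univ.filter (fun k => u ∈ G.ends k) :=
        Finset.mem_filter.mpr ⟨Finset.mem_univ _, hue⟩
      rw [Finset.card_erase_of_mem hemem] at hle
      have h2 : (Finset.univ.filter (fun k => u ∈ G.ends k)).card = 2 := by
        rw [← degIn, ← deg_eq_degIn_univ hl]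
        exact hdegu
      rw [degIn]
      omega
    by_cases hvF : G.degIn F v ≤ 1
    · -- adding e would strictly improve : contradiction with maximality
      exfalso
      have hdeg₂ : ∀ z, G.degIn (insert e F) z ≤ 2 := by
        intro z
        by_cases hz : z ∈ G.ends e
        · have hfil : (insert e F).filter (fun k => z ∈ G.ends k) =
              insert e (F.filter (fun k => z ∈ G.ends k)) := by
            rw [Finset.filter_insert, if_pos hz]
          rw [degIn, hfil]
          have hle := Finset.card_insert_le e (F.filter (fun k => z ∈ G.ends k))
          rw [he, Sym2.mem_iff] at hz
          rcases hz with rfl | rfl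
          · rw [degIn] at huF; omega
          · rw [degIn] at hvF; omega
        · rw [degIn, Finset.filter_insert, if_neg hz, ← degIn]
          exact hFgood.1 z
      have hF0₂ : ∀ K ⊆ insert e F, G.TwoReg K → e ∉ K → Even K.card := by
        intro K hK hreg heK
        refine hFgood.2 K ?_ hreg
        intro k hk
        rcases Finset.mem_insert.mp (hK hk) with rfl | h
        · exact absurd hk heK
        · exact h
      obtain ⟨F₃, hGood, _, _, hc3⟩ :=
        fix_core hl hconn hδ hnotEvenCycle hnotOddCycle hedge hue hdeg₂ hF0₂
          (Finset.mem_insert_self e F)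
      have hle := hGood.card_le_nu2 hl
      rw [hc3, Finset.card_insert_of_notMem heF, hFcard] at hle
      omega
    · -- swap out an F-edge at v, then add e
      have hvF2 : G.degIn F v = 2 := by
        have := hFgood.1 v
        omega
      have hpos : 0 < (F.filter (fun k => v ∈ G.ends k)).card := by
        have : G.degIn F v = 2 := hvF2
        rw [degIn] at this
        omega
      obtain ⟨k₁, hk₁⟩ := Finset.card_pos.mp hpos
      have hk₁F : k₁ ∈ F := (Finset.mem_filter.mp hk₁).1
      have hvk₁ : v ∈ G.ends k₁ := (Finset.mem_filter.mp hk₁).2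
      have hdeg₂ : ∀ z, G.degIn (insert e (F.erase k₁)) z ≤ 2 := by
        intro z
        by_cases hz : z ∈ G.ends e
        · have hfil : (insert e (F.erase k₁)).filter (fun k => z ∈ G.ends k) =
              insert e ((F.erase k₁).filter (fun k => z ∈ G.ends k)) := by
            rw [Finset.filter_insert, if_pos hz]
          rw [degIn, hfil]
          have hle := Finset.card_insert_le e ((F.erase k₁).filter (fun k => z ∈ G.ends k))
          rw [he, Sym2.mem_iff] at hz
          rcases hz with rfl | rfl
          · have hsub : (F.erase k₁).filter (fun k => z ∈ G.ends k) ⊆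
                F.filter (fun k => z ∈ G.ends k) :=
              Finset.filter_subset_filter _ (Finset.erase_subset _ _)
            have h4 := Finset.card_le_card hsub
            rw [degIn] at huF
            omega
          · have hfe : (F.erase k₁).filter (fun k => z ∈ G.ends k) =
                (F.filter (fun k => z ∈ G.ends k)).erase k₁ := Finset.filter_erase _ _ _
            have hmem1 : k₁ ∈ F.filter (fun k => z ∈ G.ends k) :=
              Finset.mem_filter.mpr ⟨hk₁F, hvk₁⟩
            have h4 : ((F.erase k₁).filter (fun k => z ∈ G.ends k)).card ≤ 1 := by
              rw [hfe, Finset.card_erase_of_mem hmem1]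
              rw [degIn] at hvF2
              omega
            omega
        · rw [degIn, Finset.filter_insert, if_neg hz, ← degIn]
          calc G.degIn (F.erase k₁) z ≤ G.degIn F z := degIn_mono (Finset.erase_subset _ _) z
            _ ≤ 2 := hFgood.1 z
      have hF0₂ : ∀ K ⊆ insert e (F.erase k₁), G.TwoReg K → e ∉ K → Even K.card := by
        intro K hK hreg heK
        refine hFgood.2 K ?_ hreg
        intro k hk
        rcases Finset.mem_insert.mp (hK hk) with rfl | h
        · exact absurd hk heK
        · exact Finset.mem_of_mem_erase h
      have hcard₂ : (insert e (F.erase k₁)).card = F.card := by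
        rw [Finset.card_insert_of_notMem (fun hc => heF (Finset.mem_of_mem_erase hc)),
          Finset.card_erase_of_mem hk₁F]
        have : 0 < F.card := Finset.card_pos.mpr ⟨k₁, hk₁F⟩
        omega
      have := finish (insert e (F.erase k₁)) hdeg₂ hF0₂ (Finset.mem_insert_self _ _)
      rw [hcard₂] at this
      omega

/-- Upper bound. -/
lemma upper2 (hl : G.Loopless) (hconn : G.Connected) (hδ : ∀ z, 2 ≤ G.deg z)
    (hnotEvenCycle : ¬ ((∀ z : G.V, G.deg z = 2) ∧ Even (Fintype.card G.E)))
    (hnotOddCycle : ¬ ((∀ z : G.V, G.deg z = 2) ∧ Odd (Fintype.card G.E)))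
    (hedge : ∀ g : G.E, ∀ a b : G.V, G.ends g = s(a, b) → ¬ (3 ≤ G.deg a ∧ 3 ≤ G.deg b))
    (he : G.ends e = s(u, v)) :
    (G.subdivideOnce e u v).nu2 ≤ G.nu2 + 1 := by
  have huv : u ≠ v := by
    intro hc
    apply hl e
    show (G.ends e).IsDiag
    rw [he, hc]
    exact Sym2.mk_isDiag_iff.mpr rfl
  have hue : u ∈ G.ends e := by rw [he]; exact Sym2.mem_mk_left _ _
  obtain ⟨H, H', hH, hH', hd, hcard⟩ := exists_nu2 (G := G.subdivideOnce e u v)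
  set F' := H ∪ H' with hF'def
  have hF'good := good_of_matchings hH hH' hd
  have hF'card : F'.card = (G.subdivideOnce e u v).nu2 := by
    rw [hF'def, Finset.card_union_of_disjoint hd]
    exact hcard
  have hlift_even : ∀ K ⊆ edgeProj e u v F', G.TwoReg K → e ∉ K → Even K.card := by
    intro K hK hreg heK
    have hliftsub : edgeLift e u v K ⊆ F' := by
      intro k' hk'
      match k' with
      | Sum.inl f =>
        have hf1 : f.1 ∈ K := mem_lift_inl.mp hk'
        have hmem := hK hf1
        exact (mem_proj_ne f.2).mp hmem
      | Sum.inr b => exact absurd hk' (not_mem_lift_inr b)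
    have hregL := twoReg_lift huv he heK hreg
    have := hF'good.2 _ hliftsub hregL
    rwa [card_lift heK] at this
  by_cases hboth : Sum.inr true ∈ F' ∧ Sum.inr false ∈ F'
  · have hbal : ((Sum.inr true : (G.subdivideOnce e u v).E) ∈ F') ↔ (Sum.inr false ∈ F') :=
      iff_of_true hboth.1 hboth.2
    have hdeg : ∀ z, G.degIn (edgeProj e u v F') z ≤ 2 := by
      intro z
      rw [degproj_eq huv he hbal z]
      exact hF'good.1 (Sum.inl z)
    have he₂ : e ∈ edgeProj e u v F' := mem_proj_e.mpr hboth
    obtain ⟨F₃, hGood, _, _, hc3⟩ :=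
      fix_core hl hconn hδ hnotEvenCycle hnotOddCycle hedge hue hdeg hlift_even he₂
    have hle := hGood.card_le_nu2 hl
    rw [hc3] at hle
    have hFc := card_proj_both hboth
    have h1 : 1 ≤ F'.card := Finset.card_pos.mpr ⟨_, hboth.1⟩
    omega
  · have heF : e ∉ edgeProj e u v F' := fun hc => hboth (mem_proj_e.mp hc)
    have hgood : G.Good (edgeProj e u v F') := by
      constructor
      · intro z
        calc G.degIn (edgeProj e u v F') z ≤ _ := degproj_le he z
          _ ≤ 2 := hF'good.1 (Sum.inl z)
      · intro K hK hreg
        exact hlift_even K hK hreg (fun hc => heF (hK hc))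
    have hle := hgood.card_le_nu2 hl
    have hge := card_proj_ge (K' := F')
    omega

end MainBounds


section Final

variable {G : Multigraph} {e : G.E} {u v : G.V}

lemma nu2_swap_le :
    (G.subdivideOnce e u v).nu2 ≤ (G.subdivideOnce e v u).nu2 := by
  refine nu2_le ?_
  intro H H' hH hH' hd
  set Φ : (G.subdivideOnce e u v).E → (G.subdivideOnce e v u).E :=
    Sum.map id Bool.not with hΦ
  have hends : ∀ k', (G.subdivideOnce e v u).ends (Φ k') = (G.subdivideOnce e u v).ends k' := by
    intro k'
    match k' with
    | Sum.inl f => rfl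
    | Sum.inr true => rfl
    | Sum.inr false => rfl
  have hinj : Function.Injective Φ := by
    intro a b hab
    match a, b with
    | Sum.inl f, Sum.inl f' =>
      have h1 : (Sum.inl (id f) : (G.subdivideOnce e v u).E) = Sum.inl (id f') := hab
      rw [Sum.inl.injEq] at h1
      have h2 : f = f' := h1
      rw [h2]
    | Sum.inl f, Sum.inr b' => exact absurd hab (by simp [hΦ])
    | Sum.inr b', Sum.inl f => exact absurd hab (by simp [hΦ])
    | Sum.inr c, Sum.inr c' =>
      have h1 : (Sum.inr (!c) : (G.subdivideOnce e v u).E) = Sum.inr (!c') := hab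
      rw [Sum.inr.injEq] at h1
      have h2 : c = c' := by
        cases c <;> cases c' <;> simp_all
      rw [h2]
  have himg : ∀ M, (G.subdivideOnce e u v).IsMatching M →
      (G.subdivideOnce e v u).IsMatching (M.image Φ) := by
    intro M hM
    constructor
    · intro k hk
      obtain ⟨k0, hk0, rfl⟩ := Finset.mem_image.mp hk
      intro hloop
      apply hM.1 k0 hk0
      show ((G.subdivideOnce e u v).ends k0).IsDiag
      rw [← hends k0]
      exact hloop
    · intro a ha b hb hne w hwa hwb
      obtain ⟨a0, ha0, rfl⟩ := Finset.mem_image.mp ha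
      obtain ⟨b0, hb0, rfl⟩ := Finset.mem_image.mp hb
      have hne0 : a0 ≠ b0 := fun hc => hne (by rw [hc])
      rw [hends] at hwa hwb
      exact hM.2 a0 ha0 b0 hb0 hne0 w hwa hwb
  have hdisj : Disjoint (H.image Φ) (H'.image Φ) :=
    (Finset.disjoint_image hinj).mpr hd
  have hle := le_nu2 (himg H hH) (himg H' hH') hdisj
  rw [Finset.card_image_of_injective _ hinj, Finset.card_image_of_injective _ hinj] at hle
  exact hle

lemma nu2_swap :
    (G.subdivideOnce e u v).nu2 = (G.subdivideOnce e v u).nu2 :=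
  le_antisymm nu2_swap_le nu2_swap_le

/-- The main theorem. -/
theorem nu2_subdivideOnce_eq'
    (hloopless : G.Loopless) (hconn : G.Connected)
    (hδ : ∀ z : G.V, 2 ≤ G.deg z)
    (hnotEvenCycle : ¬ ((∀ z : G.V, G.deg z = 2) ∧ Even (Fintype.card G.E)))
    (hedge : ∀ f : G.E, ∀ a b : G.V, G.ends f = s(a, b) → ¬ (3 ≤ G.deg a ∧ 3 ≤ G.deg b))
    (he : G.ends e = s(u, v)) :
    (((∀ z : G.V, G.deg z = 2) ∧ Odd (Fintype.card G.E)) →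
        (G.subdivideOnce e u v).nu2 = G.nu2 + 2) ∧
    (¬ ((∀ z : G.V, G.deg z = 2) ∧ Odd (Fintype.card G.E)) →
        (G.subdivideOnce e u v).nu2 = G.nu2 + 1) := by
  have huv : u ≠ v := by
    intro hc
    apply hloopless e
    show (G.ends e).IsDiag
    rw [he, hc]
    exact Sym2.mk_isDiag_iff.mpr rfl
  constructor
  · rintro ⟨hreg2, hodd⟩
    have hnuG : G.nu2 = Fintype.card G.E - 1 := (cyc_nu2 hloopless hconn hreg2 e).1 hodd
    have hl' := sub_loopless (e := e) (u := u) (v := v) hloopless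
    have hconn' := sub_connected hloopless hconn he
    have hreg2' : ∀ p : (G.subdivideOnce e u v).V, (G.subdivideOnce e u v).deg p = 2 := by
      intro p
      match p with
      | Sum.inl z =>
        rw [sub_deg_inl hloopless huv he z]
        exact hreg2 z
      | Sum.inr () => exact sub_deg_w hloopless
    have hcard' := sub_card_edges (G := G) (e := e) (u := u) (v := v)
    have heven' : Even (Fintype.card (G.subdivideOnce e u v).E) := by
      rw [hcard']
      rcases hodd with ⟨m, hm⟩
      exact ⟨m + 1, by omega⟩
    have hnuG' := (cyc_nu2 hl' hconn' hreg2' (Sum.inr true)).2 heven'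
    have hpos : 1 ≤ Fintype.card G.E := by
      have : Nonempty G.E := ⟨e⟩
      exact Fintype.card_pos
    rw [hnuG, hnuG', hcard']
    omega
  · intro hnotOdd
    have hle := upper2 hloopless hconn hδ hnotEvenCycle hnotOdd hedge he
    have hge : G.nu2 + 1 ≤ (G.subdivideOnce e u v).nu2 := by
      have hd2 : G.deg u = 2 ∨ G.deg v = 2 := by
        have h := hedge e u v he
        have h1 := hδ u
        have h2 := hδ v
        by_contra hc
        push_neg at hc
        exact h ⟨by omega, by omega⟩
      rcases hd2 with h | h
      · exact lower2 hloopless hconn hδ hnotEvenCycle hnotOdd hedge he h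
      · rw [nu2_swap (u := u) (v := v)]
        exact lower2 hloopless hconn hδ hnotEvenCycle hnotOdd hedge
          (he.trans Sym2.eq_swap) h
    omega

end Final

/-- Under the hypotheses of Statement 8, ν₂ increases by exactly 2 under a
single subdivision if G is an odd cycle, and by exactly 1 otherwise. -/
theorem nu2_subdivideOnce_eq
    (G : Multigraph) (hloopless : G.Loopless) (hconn : G.Connected)
    (hδ : ∀ v : G.V, 2 ≤ G.deg v)
    (hnotEvenCycle : ¬ ((∀ v : G.V, G.deg v = 2) ∧ Even (Fintype.card G.E)))
    (hedge : ∀ f : G.E, ∀ a b : G.V, G.ends f = s(a, b) → ¬ (3 ≤ G.deg a ∧ 3 ≤ G.deg b))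
    (e : G.E) (u v : G.V) (he : G.ends e = s(u, v)) :
    (((∀ v : G.V, G.deg v = 2) ∧ Odd (Fintype.card G.E)) →
        (G.subdivideOnce e u v).nu2 = G.nu2 + 2) ∧
    (¬ ((∀ v : G.V, G.deg v = 2) ∧ Odd (Fintype.card G.E)) →
        (G.subdivideOnce e u v).nu2 = G.nu2 + 1) :=
  nu2_subdivideOnce_eq' hloopless hconn hδ hnotEvenCycle hedge he

end Multigraph
end

section
/- Let G₀ be a connected cubic pseudo-graph without loops, and let G be obtained from G₀ by subdividing each edge e exactly k(e) times with k(e) ≥ 2 for all e. Then ν₂(G) ≥ (7/8)·|V(G)|. -/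
open Finset

set_option linter.unusedSectionVars false

section Abstract

variable {V E : Type} [Fintype V] [DecidableEq V] [Fintype E] [DecidableEq E]
variable (fst snd : E → V)

/-- An edge set is acyclic iff every nonempty subset has a vertex of degree one. -/
def Acyc (F : Finset E) : Prop :=
  ∀ F' ⊆ F, F'.Nonempty → ∃ v, (F'.filter (fun e => fst e = v ∨ snd e = v)).card = 1

lemma acyc_empty : Acyc fst snd (∅ : Finset E) := by
  intro F' hF' hne
  exact absurd (Finset.subset_empty.mp hF') (Finset.nonempty_iff_ne_empty.mp hne)

lemma exists_maximal_acyc :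
    ∃ F : Finset E, Acyc fst snd F ∧ ∀ e ∉ F, ¬ Acyc fst snd (insert e F) := by
  classical
  obtain ⟨F, hFmem, hmax⟩ := Finset.exists_max_image
    ((univ : Finset (Finset E)).filter (fun F => Acyc fst snd F)) Finset.card
    ⟨∅, by simp [acyc_empty]⟩
  refine ⟨F, (Finset.mem_filter.mp hFmem).2, fun e he hacyc => ?_⟩
  have := hmax (insert e F) (by simp [hacyc])
  rw [Finset.card_insert_of_notMem he] at this
  omega

/-- In a maximal acyclic set, every vertex of positive degree is covered. -/
lemma maximal_acyc_covers
    (hdeg : ∀ v : V, (univ.filter (fun e => fst e = v ∨ snd e = v)).card = 3)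
    {F : Finset E} (hF : Acyc fst snd F)
    (hmax : ∀ e ∉ F, ¬ Acyc fst snd (insert e F)) (v : V) :
    ∃ e ∈ F, fst e = v ∨ snd e = v := by
  classical
  by_contra hnone
  push_neg at hnone
  -- v has an incident edge
  have h3 := hdeg v
  have hne : (univ.filter (fun e => fst e = v ∨ snd e = v)).Nonempty := by
    rw [← Finset.card_pos, h3]; omega
  obtain ⟨e, he⟩ := hne
  have hei : fst e = v ∨ snd e = v := (Finset.mem_filter.mp he).2
  have heF : e ∉ F := fun h => by rcases hei with h1 | h1; exacts [(hnone e h).1 h1, (hnone e h).2 h1]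
  apply hmax e heF
  intro F' hF' hFne
  by_cases heF' : e ∈ F'
  · refine ⟨v, ?_⟩
    rw [Finset.card_eq_one]
    refine ⟨e, Finset.ext fun f => ?_⟩
    simp only [Finset.mem_filter, Finset.mem_singleton]
    constructor
    · rintro ⟨hfF', hfi⟩
      by_contra hfe
      have : f ∈ F := by
        have := hF' hfF'
        rcases Finset.mem_insert.mp this with h | h
        · exact absurd h hfe
        · exact h
      rcases hfi with h1 | h1; exacts [(hnone f this).1 h1, (hnone f this).2 h1]
    · rintro rfl; exact ⟨heF', hei⟩
  · apply hF F' _ hFne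
    intro f hf
    rcases Finset.mem_insert.mp (hF' hf) with h | h
    · exact absurd (h ▸ hf) heF'
    · exact h

end Abstract

section Abstract2
variable {V E : Type} [Fintype V] [DecidableEq V] [Fintype E] [DecidableEq E]
variable (fst snd : E → V)

lemma exists_hall_injection
    (hne : ∀ e, fst e ≠ snd e)
    (hdeg : ∀ v : V, (univ.filter (fun e => fst e = v ∨ snd e = v)).card = 3)
    {F : Finset E}
    (hcov : ∀ v : V, ∃ e ∈ F, fst e = v ∨ snd e = v) :
    ∃ f : {e : E // e ∉ F} → V, Function.Injective f ∧
      ∀ e : {e : E // e ∉ F}, f e = fst e.1 ∨ f e = snd e.1 := by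
  classical
  have key : ∀ s : Finset {e : E // e ∉ F},
      s.card ≤ (s.biUnion (fun e => ({fst e.1, snd e.1} : Finset V))).card := by
    intro s
    set B := s.biUnion (fun e => ({fst e.1, snd e.1} : Finset V)) with hB
    have hBmem : ∀ e ∈ s, fst e.1 ∈ B ∧ snd e.1 ∈ B := by
      intro e he
      constructor <;> exact Finset.mem_biUnion.mpr ⟨e, he, by simp⟩
    have hcount : ∑ v ∈ B, (s.filter (fun e => fst e.1 = v ∨ snd e.1 = v)).card
        = 2 * s.card := by
      calc ∑ v ∈ B, (s.filter (fun e => fst e.1 = v ∨ snd e.1 = v)).card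
          = ∑ v ∈ B, ∑ e ∈ s, (if fst e.1 = v ∨ snd e.1 = v then 1 else 0) := by
            simp only [Finset.card_filter]
        _ = ∑ e ∈ s, ∑ v ∈ B, (if fst e.1 = v ∨ snd e.1 = v then 1 else 0) :=
            Finset.sum_comm
        _ = ∑ e ∈ s, (B.filter (fun v => fst e.1 = v ∨ snd e.1 = v)).card := by
            simp only [Finset.card_filter]
        _ = ∑ e ∈ s, 2 := by
            refine Finset.sum_congr rfl fun e he => ?_
            have : B.filter (fun v => fst e.1 = v ∨ snd e.1 = v)
                = {fst e.1, snd e.1} := by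
              ext v
              simp only [Finset.mem_filter, Finset.mem_insert, Finset.mem_singleton]
              constructor
              · rintro ⟨-, h | h⟩
                · exact Or.inl h.symm
                · exact Or.inr h.symm
              · rintro (rfl | rfl)
                · exact ⟨(hBmem e he).1, Or.inl rfl⟩
                · exact ⟨(hBmem e he).2, Or.inr rfl⟩
            rw [this, Finset.card_pair (hne e.1)]
        _ = 2 * s.card := by
            rw [Finset.sum_const, smul_eq_mul, mul_comm]
    have hbound : ∀ v ∈ B, (s.filter (fun e => fst e.1 = v ∨ snd e.1 = v)).card ≤ 2 := by
      intro v _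
      have hsub : (s.filter (fun e => fst e.1 = v ∨ snd e.1 = v)).card
          ≤ ((univ.filter (fun e : E => fst e = v ∨ snd e = v)).filter
              (fun e => e ∉ F)).card := by
        apply Finset.card_le_card_of_injOn (fun e => e.1)
        · intro e he
          simp only [Finset.mem_coe, Finset.mem_filter, Finset.mem_univ, true_and] at he ⊢
          exact ⟨he.2, e.2⟩
        · intro a _ b _ h; exact Subtype.ext h
      have hsplit := Finset.card_filter_add_card_filter_not
        (s := univ.filter (fun e : E => fst e = v ∨ snd e = v)) (p := fun e => e ∈ F)
      rw [hdeg v] at hsplit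
      have hpos : 0 < ((univ.filter (fun e : E => fst e = v ∨ snd e = v)).filter
          (fun e => e ∈ F)).card := by
        obtain ⟨e, heF, hei⟩ := hcov v
        exact Finset.card_pos.mpr ⟨e, by simp [hei, heF]⟩
      omega
    have := Finset.sum_le_card_nsmul B _ 2 hbound
    rw [hcount] at this
    simp only [smul_eq_mul] at this
    omega
  obtain ⟨f, hinj, hmem⟩ :=
    (Finset.all_card_le_biUnion_card_iff_exists_injective _).mp key
  refine ⟨f, hinj, fun e => ?_⟩
  have := hmem e
  simp only [Finset.mem_insert, Finset.mem_singleton] at this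
  exact this

end Abstract2

section Abstract3
variable {V E : Type} [Fintype V] [DecidableEq V] [Fintype E] [DecidableEq E]
variable (fst snd : E → V)

/-- The label that an edge-end `(e, v)` receives, given raw bits `x`. -/
def labL (snd : E → V) (p : E → Bool) (x : E → Bool) (v : V) (e : E) : Bool :=
  x e ^^ (if snd e = v then p e else false)

lemma csp_solve (p : E → Bool)
    {F : Finset E} (hF : Acyc fst snd F)
    (skip : V → E)
    (hskip_nonF : ∀ e, e ∉ F → skip (fst e) = e ∨ skip (snd e) = e)
    (J : V → Finset E)
    (hJdef : ∀ v, J v =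
      (univ.filter (fun e => fst e = v ∨ snd e = v)).erase (skip v))
    (g1 g2 : V → E) (hg : ∀ v, g1 v ≠ g2 v ∧ J v = {g1 v, g2 v}) :
    ∀ (n : ℕ) (W : Finset V), W.card = n →
      ∃ x : E → Bool, ∀ v ∈ W,
        labL snd p x v (g1 v) ≠ labL snd p x v (g2 v) := by
  classical
  have memJ : ∀ v e, e ∈ J v ↔ ((fst e = v ∨ snd e = v) ∧ skip v ≠ e) := by
    intro v e
    rw [hJdef v, Finset.mem_erase, Finset.mem_filter]
    constructor
    · rintro ⟨h1, -, h2⟩; exact ⟨h2, fun h => h1 h.symm⟩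
    · rintro ⟨h1, h2⟩; exact ⟨fun h => h2 h.symm, Finset.mem_univ e, h1⟩
  have hends : ∀ e (v w : V), v ≠ w → (fst e = v ∨ snd e = v) →
      (fst e = w ∨ snd e = w) →
      (fst e = v ∧ snd e = w) ∨ (fst e = w ∧ snd e = v) := by
    intro e v w hvw h1 h2
    rcases h1 with h1 | h1 <;> rcases h2 with h2 | h2
    · exact absurd (h1.symm.trans h2) hvw
    · exact Or.inl ⟨h1, h2⟩
    · exact Or.inr ⟨h2, h1⟩
    · exact absurd (h1.symm.trans h2) hvw
  have hg1J : ∀ v, g1 v ∈ J v := fun v => by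
    rw [(hg v).2]; exact Finset.mem_insert_self _ _
  have hg2J : ∀ v, g2 v ∈ J v := fun v => by
    rw [(hg v).2]; exact Finset.mem_insert.mpr (Or.inr (Finset.mem_singleton_self _))
  intro n
  induction n with
  | zero =>
    intro W hW
    refine ⟨fun _ => false, fun v hv => ?_⟩
    rw [Finset.card_eq_zero.mp hW] at hv
    exact absurd hv (Finset.notMem_empty v)
  | succ m ih =>
    intro W hW
    have hWne : W.Nonempty := by
      rw [← Finset.card_pos, hW]; omega
    have hfree : ∃ v ∈ W, ∃ ee ∈ J v, ∀ w ∈ W, w ≠ v → ee ∉ J w := by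
      by_contra hcon
      push_neg at hcon
      set F' : Finset E :=
        univ.filter (fun e => ∃ v ∈ W, ∃ w ∈ W, v ≠ w ∧ e ∈ J v ∧ e ∈ J w) with hF'def
      have hmemF' : ∀ e, e ∈ F' ↔
          ∃ v ∈ W, ∃ w ∈ W, v ≠ w ∧ e ∈ J v ∧ e ∈ J w := by
        intro e; simp [hF'def]
      have hF'F : F' ⊆ F := by
        intro e he
        obtain ⟨v, hvW, w, hwW, hvw, heJv, heJw⟩ := (hmemF' e).mp he
        have h1 := (memJ v e).mp heJv
        have h2 := (memJ w e).mp heJw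
        by_contra heF
        have hskips := hskip_nonF e heF
        rcases hends e v w hvw h1.1 h2.1 with ⟨ha, hb⟩ | ⟨ha, hb⟩ <;>
          rw [ha, hb] at hskips <;> rcases hskips with h | h
        · exact h1.2 h
        · exact h2.2 h
        · exact h2.2 h
        · exact h1.2 h
      have hF'ne : F'.Nonempty := by
        obtain ⟨v₀, hv₀⟩ := hWne
        obtain ⟨w, hwW, hwne, hJw⟩ := hcon v₀ hv₀ (g1 v₀) (hg1J v₀)
        exact ⟨g1 v₀, (hmemF' _).mpr
          ⟨v₀, hv₀, w, hwW, fun h => hwne h.symm, hg1J v₀, hJw⟩⟩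
      obtain ⟨u, hu⟩ := hF F' hF'F hF'ne
      obtain ⟨e₀, he₀⟩ := Finset.card_eq_one.mp hu
      have he₀mem : e₀ ∈ F' ∧ (fst e₀ = u ∨ snd e₀ = u) := by
        have h : e₀ ∈ F'.filter (fun e => fst e = u ∨ snd e = u) := by
          rw [he₀]; exact Finset.mem_singleton_self e₀
        exact ⟨(Finset.mem_filter.mp h).1, (Finset.mem_filter.mp h).2⟩
      have huW : u ∈ W := by
        obtain ⟨v, hvW, w, hwW, hvw, heJv, heJw⟩ := (hmemF' e₀).mp he₀mem.1
        rcases hends e₀ v w hvw ((memJ v e₀).mp heJv).1 ((memJ w e₀).mp heJw).1 with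
          ⟨ha, hb⟩ | ⟨ha, hb⟩ <;> rcases he₀mem.2 with h | h
        · exact (ha.symm.trans h) ▸ hvW
        · exact (hb.symm.trans h) ▸ hwW
        · exact (ha.symm.trans h) ▸ hwW
        · exact (hb.symm.trans h) ▸ hvW
      have hgF' : ∀ gg : V → E, (∀ v, gg v ∈ J v) → gg u = e₀ := by
        intro gg hgJ
        obtain ⟨w', hw'W, hw'ne, hJw'⟩ := hcon u huW (gg u) (hgJ u)
        have hmem : gg u ∈ F'.filter (fun e => fst e = u ∨ snd e = u) :=
          Finset.mem_filter.mpr ⟨(hmemF' _).mpr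
            ⟨u, huW, w', hw'W, fun h => hw'ne h.symm, hgJ u, hJw'⟩,
            ((memJ u (gg u)).mp (hgJ u)).1⟩
        rw [he₀] at hmem
        exact Finset.mem_singleton.mp hmem
      exact (hg u).1 ((hgF' g1 hg1J).trans (hgF' g2 hg2J).symm)
    obtain ⟨v, hvW, ee, heeJ, hfr⟩ := hfree
    obtain ⟨x, hx⟩ := ih (W.erase v)
      (by rw [Finset.card_erase_of_mem hvW, hW]; omega)
    have hee12 : ee = g1 v ∨ ee = g2 v := by
      have h := heeJ; rw [(hg v).2] at h; simpa using h
    set oe := if ee = g1 v then g2 v else g1 v with hoe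
    have hoene : oe ≠ ee := by
      by_cases h : ee = g1 v
      · rw [hoe, if_pos h, h]; exact fun hh => (hg v).1 hh.symm
      · rw [hoe, if_neg h]; exact fun hh => h hh.symm
    set t := labL snd p x v oe with ht
    set val := (!t) ^^ (if snd ee = v then p ee else false) with hval
    refine ⟨Function.update x ee val, fun w hw => ?_⟩
    have h_ee : labL snd p (Function.update x ee val) v ee = !t := by
      simp only [labL, Function.update_self, hval]
      rw [Bool.xor_assoc, Bool.xor_self, Bool.xor_false]
    have h_keep : ∀ u e, e ≠ ee →
        labL snd p (Function.update x ee val) u e = labL snd p x u e := by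
      intro u e hene
      simp only [labL, Function.update_of_ne hene]
    by_cases hwv : w = v
    · rw [hwv]
      rcases hee12 with h | h
      · have hoeg : oe = g2 v := by rw [hoe, if_pos h]
        rw [← h, ← hoeg, h_ee, h_keep v oe hoene, ← ht]
        exact Bool.not_ne_self t
      · have hoeg : oe = g1 v := by
          rw [hoe, if_neg (fun hh => (hg v).1 (hh.symm.trans h))]
        rw [← h, ← hoeg, h_ee, h_keep v oe hoene, ← ht]
        exact fun hh => Bool.not_ne_self t hh.symm
    · have hwW' : w ∈ W.erase v := Finset.mem_erase.mpr ⟨hwv, hw⟩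
      have hg1ne : g1 w ≠ ee := fun h => hfr w hw hwv (h ▸ hg1J w)
      have hg2ne : g2 w ≠ ee := fun h => hfr w hw hwv (h ▸ hg2J w)
      rw [h_keep w _ hg1ne, h_keep w _ hg2ne]
      exact hx w hwW'

end Abstract3

section Abstract4
variable {V E : Type} [Fintype V] [DecidableEq V] [Fintype E] [DecidableEq E]
variable (fst snd : E → V)

theorem exists_good_labels
    (hne : ∀ e, fst e ≠ snd e)
    (hdeg : ∀ v : V, (univ.filter (fun e => fst e = v ∨ snd e = v)).card = 3)
    (p : E → Bool) :
    ∃ a b : E → Option Bool,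
      (∀ e x y, a e = some x → b e = some y → y = (x ^^ p e)) ∧
      (∀ (v : V) (c : Bool) (e e' : E), e ≠ e' →
        (if fst e = v then a e else if snd e = v then b e else none) = some c →
        (if fst e' = v then a e' else if snd e' = v then b e' else none) = some c →
        False) ∧
      (univ.filter (fun e => a e = none)).card
        + (univ.filter (fun e => b e = none)).card ≤ Fintype.card V := by
  classical
  obtain ⟨F, hF, hmax⟩ := exists_maximal_acyc fst snd
  have hcov : ∀ v : V, ∃ e ∈ F, fst e = v ∨ snd e = v :=
    maximal_acyc_covers fst snd hdeg hF hmax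
  obtain ⟨f, hinj, hfmem⟩ := exists_hall_injection fst snd hne hdeg hcov
  have hinc : ∀ v : V, ∃ e : E, fst e = v ∨ snd e = v := by
    intro v
    have h3 := hdeg v
    have : (univ.filter (fun e => fst e = v ∨ snd e = v)).Nonempty := by
      rw [← Finset.card_pos, h3]; omega
    obtain ⟨e, he⟩ := this
    exact ⟨e, (Finset.mem_filter.mp he).2⟩
  set skip : V → E := fun v =>
    if h : ∃ ε : {e : E // e ∉ F}, f ε = v then (Classical.choose h).1
    else Classical.choose (hinc v) with hskipdef
  have hskip_inc : ∀ v, fst (skip v) = v ∨ snd (skip v) = v := by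
    intro v
    rw [hskipdef]
    by_cases h : ∃ ε : {e : E // e ∉ F}, f ε = v
    · simp only [dif_pos h]
      have h1 := Classical.choose_spec h
      rcases hfmem (Classical.choose h) with h2 | h2
      · exact Or.inl (h2 ▸ h1)
      · exact Or.inr (h2 ▸ h1)
    · simp only [dif_neg h]
      exact Classical.choose_spec (hinc v)
  have hskip_nonF : ∀ e, e ∉ F → skip (fst e) = e ∨ skip (snd e) = e := by
    intro e heF
    have key : skip (f ⟨e, heF⟩) = e := by
      rw [hskipdef]
      have h : ∃ ε : {e : E // e ∉ F}, f ε = f ⟨e, heF⟩ := ⟨⟨e, heF⟩, rfl⟩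
      simp only [dif_pos h]
      have := Classical.choose_spec h
      have := hinj this
      rw [this]
    rcases hfmem ⟨e, heF⟩ with h | h
    · exact Or.inl (h ▸ key)
    · exact Or.inr (h ▸ key)
  set J : V → Finset E := fun v =>
    (univ.filter (fun e => fst e = v ∨ snd e = v)).erase (skip v) with hJdef
  have hJcard : ∀ v, (J v).card = 2 := by
    intro v
    rw [hJdef]
    have hmem : skip v ∈ univ.filter (fun e => fst e = v ∨ snd e = v) :=
      Finset.mem_filter.mpr ⟨Finset.mem_univ _, hskip_inc v⟩
    rw [Finset.card_erase_of_mem hmem, hdeg v]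
  have hJ2 : ∀ v, ∃ a b : E, a ≠ b ∧ J v = {a, b} := by
    intro v
    exact Finset.card_eq_two.mp (hJcard v)
  choose g1 g2 hg12ne hg12eq using hJ2
  obtain ⟨x, hx⟩ := csp_solve fst snd p hF skip hskip_nonF J (fun v => rfl)
    g1 g2 (fun v => ⟨hg12ne v, hg12eq v⟩) (Fintype.card V) univ rfl
  set a : E → Option Bool := fun e =>
    if skip (fst e) = e then none else some (x e) with hadef
  set b : E → Option Bool := fun e =>
    if skip (snd e) = e then none else some (x e ^^ p e) with hbdef
  have memJ : ∀ v e, e ∈ J v ↔ ((fst e = v ∨ snd e = v) ∧ skip v ≠ e) := by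
    intro v e
    rw [hJdef]
    simp only [Finset.mem_erase, Finset.mem_filter, Finset.mem_univ, true_and]
    constructor
    · rintro ⟨h1, h2⟩; exact ⟨h2, fun h => h1 h.symm⟩
    · rintro ⟨h1, h2⟩; exact ⟨fun h => h2 h.symm, h1⟩
  -- key fact: a labelled end at v lies in J v and its label is labL
  have hlab : ∀ (v : V) (c : Bool) (e : E),
      (if fst e = v then a e else if snd e = v then b e else none) = some c →
      e ∈ J v ∧ labL snd p x v e = c := by
    intro v c e h
    by_cases h1 : fst e = v
    · rw [if_pos h1] at h
      rw [hadef] at h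
      simp only at h
      by_cases h2 : skip (fst e) = e
      · rw [if_pos h2] at h; exact absurd h (by simp)
      · rw [if_neg h2] at h
        have hc : x e = c := Option.some_injective _ h
        have hsnd : snd e ≠ v := fun hs => hne e (h1.trans hs.symm)
        refine ⟨(memJ v e).mpr ⟨Or.inl h1, fun hh => h2 (h1 ▸ hh)⟩, ?_⟩
        simp only [labL, if_neg hsnd, Bool.xor_false, hc]
    · rw [if_neg h1] at h
      by_cases h2 : snd e = v
      · rw [if_pos h2] at h
        rw [hbdef] at h
        simp only at h
        by_cases h3 : skip (snd e) = e
        · rw [if_pos h3] at h; exact absurd h (by simp)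
        · rw [if_neg h3] at h
          have hc : (x e ^^ p e) = c := Option.some_injective _ h
          refine ⟨(memJ v e).mpr ⟨Or.inr h2, fun hh => h3 (h2 ▸ hh)⟩, ?_⟩
          simp only [labL, if_pos h2, hc]
      · rw [if_neg h2] at h; exact absurd h (by simp)
  refine ⟨a, b, ?_, ?_, ?_⟩
  · -- parity
    intro e x' y' ha hb
    rw [hadef] at ha; rw [hbdef] at hb
    simp only at ha hb
    by_cases h1 : skip (fst e) = e
    · rw [if_pos h1] at ha; exact absurd ha (by simp)
    · rw [if_neg h1] at ha
      by_cases h2 : skip (snd e) = e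
      · rw [if_pos h2] at hb; exact absurd hb (by simp)
      · rw [if_neg h2] at hb
        have := Option.some_injective _ ha
        have := Option.some_injective _ hb
        subst_vars
        rfl
  · -- vertex condition
    intro v c e e' hee' h h'
    obtain ⟨hJ, hL⟩ := hlab v c e h
    obtain ⟨hJ', hL'⟩ := hlab v c e' h'
    rw [hg12eq v] at hJ hJ'
    simp only [Finset.mem_insert, Finset.mem_singleton] at hJ hJ'
    have hcon := hx v (Finset.mem_univ v)
    rcases hJ with rfl | rfl <;> rcases hJ' with rfl | rfl
    · exact hee' rfl
    · exact hcon (hL.trans hL'.symm)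
    · exact hcon (hL'.trans hL.symm)
    · exact hee' rfl
  · -- counting
    have hAeq : univ.filter (fun e => a e = none)
        = univ.filter (fun e => skip (fst e) = e) := by
      apply Finset.filter_congr
      intro e _
      rw [hadef]
      simp only
      by_cases h : skip (fst e) = e
      · simp [h]
      · simp [h]
    have hBeq : univ.filter (fun e => b e = none)
        = univ.filter (fun e => skip (snd e) = e) := by
      apply Finset.filter_congr
      intro e _
      rw [hbdef]
      simp only
      by_cases h : skip (snd e) = e
      · simp [h]
      · simp [h]
    rw [hAeq, hBeq]
    set A := univ.filter (fun e => skip (fst e) = e) with hA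
    set B := univ.filter (fun e => skip (snd e) = e) with hB
    have hcardA : A.card = (A.image fst).card := by
      rw [Finset.card_image_of_injOn]
      intro e heA e' heA' hf
      have h1 : skip (fst e) = e := (Finset.mem_filter.mp heA).2
      have h2 : skip (fst e') = e' := (Finset.mem_filter.mp heA').2
      rw [← h1, ← h2, hf]
    have hcardB : B.card = (B.image snd).card := by
      rw [Finset.card_image_of_injOn]
      intro e heB e' heB' hf
      have h1 : skip (snd e) = e := (Finset.mem_filter.mp heB).2
      have h2 : skip (snd e') = e' := (Finset.mem_filter.mp heB').2
      rw [← h1, ← h2, hf]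
    have hdisj : Disjoint (A.image fst) (B.image snd) := by
      rw [Finset.disjoint_left]
      intro v hvA hvB
      obtain ⟨e, heA, hefst⟩ := Finset.mem_image.mp hvA
      obtain ⟨e', heB, hesnd⟩ := Finset.mem_image.mp hvB
      have h1 : skip (fst e) = e := (Finset.mem_filter.mp heA).2
      have h2 : skip (snd e') = e' := (Finset.mem_filter.mp heB).2
      rw [hefst] at h1
      rw [hesnd] at h2
      have : e = e' := h1.symm.trans h2
      subst this
      exact hne e (hefst.trans hesnd.symm)
    rw [hcardA, hcardB, ← Finset.card_union_of_disjoint hdisj]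
    calc ((A.image fst) ∪ (B.image snd)).card ≤ (univ : Finset V).card :=
          Finset.card_le_card (Finset.subset_univ _)
      _ = Fintype.card V := Finset.card_univ

end Abstract4



namespace Multigraph

section Subdiv

variable (G₀ : Multigraph) (fst snd : G₀.E → G₀.V) (k : G₀.E → ℕ)

lemma subdivide_ends (e : G₀.E) (i : Fin (k e + 1)) :
    (G₀.subdivide fst snd k).ends ⟨e, i⟩ =
    s( if _ : i.val = 0 then Sum.inl (fst e)
         else Sum.inr ⟨e, ⟨i.val - 1, by omega⟩⟩,
       if _ : i.val = k e then Sum.inl (snd e)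
         else Sum.inr ⟨e, ⟨i.val, by have := i.isLt; omega⟩⟩ ) := rfl

lemma subdivide_mem_inl (u : G₀.V) (e : G₀.E) (i : Fin (k e + 1)) :
    (Sum.inl u : (G₀.subdivide fst snd k).V) ∈ (G₀.subdivide fst snd k).ends ⟨e, i⟩ ↔
    ((i.val = 0 ∧ fst e = u) ∨ (i.val = k e ∧ snd e = u)) := by
  rw [subdivide_ends]
  refine Sym2.mem_iff.trans ?_
  constructor
  · rintro (h | h)
    · by_cases h0 : i.val = 0
      · rw [dif_pos h0] at h
        exact Or.inl ⟨h0, (Sum.inl.injEq _ _ ▸ h).symm⟩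
      · rw [dif_neg h0] at h
        exact absurd h (by simp)
    · by_cases hk : i.val = k e
      · rw [dif_pos hk] at h
        exact Or.inr ⟨hk, (Sum.inl.injEq _ _ ▸ h).symm⟩
      · rw [dif_neg hk] at h
        exact absurd h (by simp)
  · rintro (⟨h0, hu⟩ | ⟨hk, hu⟩)
    · left; rw [dif_pos h0, hu]
    · right; rw [dif_pos hk, hu]

lemma subdivide_mem_inr (e₀ : G₀.E) (j : Fin (k e₀)) (e : G₀.E) (i : Fin (k e + 1)) :
    (Sum.inr ⟨e₀, j⟩ : (G₀.subdivide fst snd k).V) ∈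
      (G₀.subdivide fst snd k).ends ⟨e, i⟩ ↔
    (e₀ = e ∧ ((i.val ≠ 0 ∧ i.val - 1 = j.val) ∨ (i.val ≠ k e ∧ i.val = j.val))) := by
  rw [subdivide_ends]
  refine Sym2.mem_iff.trans ?_
  constructor
  · rintro (h | h)
    · by_cases h0 : i.val = 0
      · rw [dif_pos h0] at h; exact absurd h (by simp)
      · rw [dif_neg h0] at h
        rw [Sum.inr.injEq] at h
        obtain ⟨he, hj⟩ := Sigma.mk.inj_iff.mp h
        subst he
        rw [heq_iff_eq] at hj
        have hv : i.val - 1 = j.val := (congrArg Fin.val hj).symm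
        exact ⟨rfl, Or.inl ⟨h0, hv⟩⟩
    · by_cases hk : i.val = k e
      · rw [dif_pos hk] at h; exact absurd h (by simp)
      · rw [dif_neg hk] at h
        rw [Sum.inr.injEq] at h
        obtain ⟨he, hj⟩ := Sigma.mk.inj_iff.mp h
        subst he
        rw [heq_iff_eq] at hj
        have hv : i.val = j.val := (congrArg Fin.val hj).symm
        exact ⟨rfl, Or.inr ⟨hk, hv⟩⟩
  · rintro ⟨rfl, (⟨h0, hj⟩ | ⟨hk, hj⟩)⟩
    · left
      rw [dif_neg h0]
      rw [Sum.inr.injEq]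
      congr 1
      exact Fin.ext (show j.val = i.val - 1 by omega)
    · right
      rw [dif_neg hk]
      rw [Sum.inr.injEq]
      congr 1
      exact Fin.ext (show j.val = i.val by omega)

lemma subdivide_no_loop (hk : ∀ e, 1 ≤ k e) (E' : (G₀.subdivide fst snd k).E) :
    ¬ (G₀.subdivide fst snd k).IsLoop E' := by
  obtain ⟨e, i⟩ := E'
  show ¬ ((G₀.subdivide fst snd k).ends ⟨e, i⟩).IsDiag
  rw [subdivide_ends]
  intro h
  replace h := Sym2.mk_isDiag_iff.mp h
  by_cases h0 : i.val = 0
  · rw [dif_pos h0] at h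
    have hkne : ¬ (i.val = k e) := by have := hk e; omega
    rw [dif_neg hkne] at h
    exact absurd h (by simp)
  · rw [dif_neg h0] at h
    by_cases hke : i.val = k e
    · rw [dif_pos hke] at h
      exact absurd h (by simp)
    · rw [dif_neg hke] at h
      replace h := Sum.inr.inj h
      obtain ⟨-, hj⟩ := Sigma.mk.inj_iff.mp h
      rw [heq_iff_eq] at hj
      have hv : i.val - 1 = i.val := congrArg Fin.val hj
      omega

end Subdiv

/-- If G is obtained from a connected loopless cubic pseudo-graph G₀ by
subdividing each edge e exactly k(e) ≥ 2 times, then ν₂(G) ≥ (7/8)·|V(G)|. -/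
theorem nu2_subdivide_ge_seven_eighths
    (G₀ : Multigraph) (fst snd : G₀.E → G₀.V)
    (hends : ∀ e : G₀.E, G₀.ends e = s(fst e, snd e))
    (hloopless : G₀.Loopless) (hconn : G₀.Connected)
    (hcubic : ∀ v : G₀.V, G₀.deg v = 3)
    (k : G₀.E → ℕ) (hk : ∀ e : G₀.E, 2 ≤ k e) :
    8 * (G₀.subdivide fst snd k).nu2 ≥ 7 * Fintype.card (G₀.subdivide fst snd k).V := by
  classical
  have hne : ∀ e, fst e ≠ snd e := by
    intro e h
    exact hloopless e (by rw [Multigraph.IsLoop, hends e, Sym2.mk_isDiag_iff]; exact h)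
  have hdeg3 : ∀ v, ((Finset.univ : Finset G₀.E).filter
      (fun e => fst e = v ∨ snd e = v)).card = 3 := by
    intro v
    have hc := hcubic v
    rw [Multigraph.deg] at hc
    rw [Finset.card_filter, ← hc]
    refine Finset.sum_congr rfl fun e _ => ?_
    have hd : ¬ (G₀.ends e = Sym2.diag v) := by
      intro h
      exact hloopless e (by rw [Multigraph.IsLoop, h]; exact Sym2.diag_isDiag v)
    rw [if_neg hd, hends e]
    simp only [Sym2.mem_iff]
    by_cases h1 : fst e = v ∨ snd e = v
    · rw [if_pos h1, if_pos (by rcases h1 with h | h; exacts [Or.inl h.symm, Or.inr h.symm])]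
    · rw [if_neg h1, if_neg
        (fun h => h1 (by rcases h with h | h; exacts [Or.inl h.symm, Or.inr h.symm]))]
  have hhand : 3 * Fintype.card G₀.V = 2 * Fintype.card G₀.E := by
    have h2 : ∑ v : G₀.V, ((Finset.univ : Finset G₀.E).filter
        (fun e => fst e = v ∨ snd e = v)).card = 2 * Fintype.card G₀.E := by
      calc ∑ v : G₀.V, ((Finset.univ : Finset G₀.E).filter
            (fun e => fst e = v ∨ snd e = v)).card
          = ∑ v : G₀.V, ∑ e : G₀.E, (if fst e = v ∨ snd e = v then 1 else 0) := by
            simp only [Finset.card_filter]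
        _ = ∑ e : G₀.E, ∑ v : G₀.V, (if fst e = v ∨ snd e = v then 1 else 0) :=
            Finset.sum_comm
        _ = ∑ e : G₀.E, ((Finset.univ : Finset G₀.V).filter
            (fun v => fst e = v ∨ snd e = v)).card := by
            simp only [Finset.card_filter]
        _ = ∑ _e : G₀.E, 2 := by
            refine Finset.sum_congr rfl fun e _ => ?_
            have heq : (Finset.univ : Finset G₀.V).filter
                (fun v => fst e = v ∨ snd e = v) = {fst e, snd e} := by
              ext v
              simp only [Finset.mem_filter, Finset.mem_univ, true_and,
                Finset.mem_insert, Finset.mem_singleton]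
              constructor
              · rintro (h | h); exacts [Or.inl h.symm, Or.inr h.symm]
              · rintro (h | h); exacts [Or.inl h.symm, Or.inr h.symm]
            rw [heq, Finset.card_pair (hne e)]
        _ = 2 * Fintype.card G₀.E := by
            rw [Finset.sum_const, Finset.card_univ, smul_eq_mul, mul_comm]
    have h1 : ∑ v : G₀.V, ((Finset.univ : Finset G₀.E).filter
        (fun e => fst e = v ∨ snd e = v)).card = 3 * Fintype.card G₀.V := by
      rw [Finset.sum_congr rfl (fun v _ => hdeg3 v), Finset.sum_const,
        Finset.card_univ, smul_eq_mul, mul_comm]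
    omega
  set p : G₀.E → Bool := fun e => decide (k e % 2 = 1) with hpdef
  obtain ⟨a, b, hP, hV, hC⟩ := exists_good_labels fst snd hne hdeg3 p
  set base : G₀.E → Bool := fun e =>
    (a e).elim ((b e).elim false (fun y => y ^^ p e)) (fun x' => x') with hbasedef
  set col : (G₀.subdivide fst snd k).E → Option Bool := fun E' =>
    if E'.2.val = 0 then a E'.1
    else if E'.2.val = k E'.1 then b E'.1
    else some (base E'.1 ^^ decide (E'.2.val % 2 = 1)) with hcoldef
  have hcol_eval : ∀ (e : G₀.E) (i : Fin (k e + 1)),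
      col ⟨e, i⟩ = if i.val = 0 then a e
        else if i.val = k e then b e
        else some (base e ^^ decide (i.val % 2 = 1)) := fun e i => rfl
  -- invariant: any colored edge on path e has its canonical alternating color
  have hcol_some : ∀ (e : G₀.E) (i : Fin (k e + 1)) (c : Bool),
      col ⟨e, i⟩ = some c → c = (base e ^^ decide (i.val % 2 = 1)) := by
    intro e i c h
    rw [hcol_eval] at h
    by_cases h0 : i.val = 0
    · rw [if_pos h0] at h
      have hbase : base e = c := by rw [hbasedef]; simp only [h, Option.elim]
      rw [h0, hbase]
      simp
    · rw [if_neg h0] at h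
      by_cases hke : i.val = k e
      · rw [if_pos hke] at h
        rcases ha : a e with _ | x
        · have hbase : base e = (c ^^ p e) := by
            rw [hbasedef]; simp only [ha, h, Option.elim]
          have hpe : decide (k e % 2 = 1) = p e := rfl
          rw [hke, hbase, hpe, Bool.xor_assoc, Bool.xor_self, Bool.xor_false]
        · have hbase : base e = x := by rw [hbasedef]; simp only [ha, Option.elim]
          have hpe : decide (k e % 2 = 1) = p e := rfl
          have := hP e x c ha h
          rw [hke, hbase, this, hpe]
      · rw [if_neg hke] at h
        exact (Option.some_injective _ h).symm
  have hcol_none : ∀ (e : G₀.E) (i : Fin (k e + 1)),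
      col ⟨e, i⟩ = none →
      (i.val = 0 ∧ a e = none) ∨ (i.val ≠ 0 ∧ i.val = k e ∧ b e = none) := by
    intro e i h
    rw [hcol_eval] at h
    by_cases h0 : i.val = 0
    · rw [if_pos h0] at h; exact Or.inl ⟨h0, h⟩
    · rw [if_neg h0] at h
      by_cases hke : i.val = k e
      · rw [if_pos hke] at h; exact Or.inr ⟨h0, hke, h⟩
      · rw [if_neg hke] at h; exact absurd h (by simp)
  -- the two matchings
  have hk1 : ∀ e, 1 ≤ k e := fun e => le_trans (by omega) (hk e)
  have hmatch : ∀ c : Bool, (G₀.subdivide fst snd k).IsMatching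
      (Finset.univ.filter (fun E' => col E' = some c)) := by
    intro c
    constructor
    · intro E' _
      exact subdivide_no_loop G₀ fst snd k hk1 E'
    · rintro E₁ hE₁ E₂ hE₂ hne12 w hw1 hw2
      obtain ⟨e₁, i₁⟩ := E₁
      obtain ⟨e₂, i₂⟩ := E₂
      have hcol1 : col ⟨e₁, i₁⟩ = some c := (Finset.mem_filter.mp hE₁).2
      have hcol2 : col ⟨e₂, i₂⟩ = some c := (Finset.mem_filter.mp hE₂).2
      cases w with
      | inl u =>
        have hw1 := (subdivide_mem_inl G₀ fst snd k u e₁ i₁).mp hw1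
        have hw2 := (subdivide_mem_inl G₀ fst snd k u e₂ i₂).mp hw2
        have hlift : ∀ (e : G₀.E) (i : Fin (k e + 1)), col ⟨e, i⟩ = some c →
            ((i.val = 0 ∧ fst e = u) ∨ (i.val = k e ∧ snd e = u)) →
            (if fst e = u then a e else if snd e = u then b e else none) = some c := by
          intro e i hcol hQ
          rcases hQ with ⟨h0, hf⟩ | ⟨hk', hs⟩
          · rw [if_pos hf]
            rw [hcol_eval, if_pos h0] at hcol
            exact hcol
          · have hfne : ¬ (fst e = u) := fun h => hne e (h.trans hs.symm)
            rw [if_neg hfne, if_pos hs]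
            have h0 : ¬ (i.val = 0) := by have := hk e; omega
            rw [hcol_eval, if_neg h0, if_pos hk'] at hcol
            exact hcol
        by_cases hee : e₁ = e₂
        · subst hee
          have hii : i₁ ≠ i₂ := fun h => hne12 (by rw [h])
          rcases hw1 with ⟨h0, hf⟩ | ⟨hk1', hs⟩ <;> rcases hw2 with ⟨h0', hf'⟩ | ⟨hk2', hs'⟩
          · exact hii (Fin.ext (h0.trans h0'.symm))
          · exact hne e₁ (hf.trans hs'.symm)
          · exact hne e₁ (hf'.trans hs.symm)
          · exact hii (Fin.ext (hk1'.trans hk2'.symm))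
        · exact hV u c e₁ e₂ hee (hlift e₁ i₁ hcol1 hw1) (hlift e₂ i₂ hcol2 hw2)
      | inr w0 =>
        obtain ⟨e₀, j⟩ := w0
        have hw1 := (subdivide_mem_inr G₀ fst snd k e₀ j e₁ i₁).mp hw1
        have hw2 := (subdivide_mem_inr G₀ fst snd k e₀ j e₂ i₂).mp hw2
        obtain ⟨he1, hd1⟩ := hw1
        obtain ⟨he2, hd2⟩ := hw2
        have hee : e₁ = e₂ := he1.symm.trans he2
        subst hee
        have hvne : i₁.val ≠ i₂.val := fun h => hne12 (by rw [Fin.ext h])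
        have hv1 := hcol_some e₁ i₁ c hcol1
        have hv2 := hcol_some e₁ i₂ c hcol2
        have hdd : decide (i₁.val % 2 = 1) = decide (i₂.val % 2 = 1) := by
          have h := hv1.symm.trans hv2
          cases hb : base e₁ <;> rw [hb] at h <;> simpa using h
        rw [decide_eq_decide] at hdd
        rcases hd1 with ⟨hz1, hj1⟩ | ⟨hz1, hj1⟩ <;> rcases hd2 with ⟨hz2, hj2⟩ | ⟨hz2, hj2⟩ <;>
          omega
  set H : Finset (G₀.subdivide fst snd k).E :=
    Finset.univ.filter (fun E' => col E' = some true) with hHdef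
  set H' : Finset (G₀.subdivide fst snd k).E :=
    Finset.univ.filter (fun E' => col E' = some false) with hH'def
  have hdisj : Disjoint H H' := by
    rw [Finset.disjoint_left]
    intro E' h1 h2
    have := ((Finset.mem_filter.mp h1).2.symm.trans (Finset.mem_filter.mp h2).2)
    exact absurd this (by simp)
  have hcardHH' : H.card + H'.card =
      (Finset.univ.filter (fun E' => ¬ (col E' = none))).card := by
    rw [← Finset.card_union_of_disjoint hdisj]
    congr 1
    ext E'
    simp only [hHdef, hH'def, Finset.mem_union, Finset.mem_filter, Finset.mem_univ, true_and]
    rcases hcE : col E' with _ | c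
    · simp
    · cases c <;> simp
  have hnones : (Finset.univ.filter (fun E' => col E' = none)).card
      ≤ Fintype.card G₀.V := by
    have hsub : (Finset.univ.filter (fun E' => col E' = none)).card ≤
        (((Finset.univ.filter (fun e => a e = none)).image Sum.inl) ∪
         ((Finset.univ.filter (fun e => b e = none)).image Sum.inr)).card := by
      apply Finset.card_le_card_of_injOn
        (fun E' => if E'.2.val = 0 then Sum.inl E'.1 else Sum.inr E'.1)
      · intro E' hE'
        obtain ⟨e, i⟩ := E'
        have hcn := (Finset.mem_filter.mp hE').2
        rcases hcol_none e i hcn with ⟨h0, han⟩ | ⟨h0, hke, hbn⟩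
        · simp only [h0, if_pos]
          apply Finset.mem_union_left
          exact Finset.mem_image.mpr ⟨e, Finset.mem_filter.mpr ⟨Finset.mem_univ e, han⟩, rfl⟩
        · simp only [if_neg h0]
          apply Finset.mem_union_right
          exact Finset.mem_image.mpr ⟨e, Finset.mem_filter.mpr ⟨Finset.mem_univ e, hbn⟩, rfl⟩
      · intro E₁ hE₁ E₂ hE₂ hf
        obtain ⟨e₁, i₁⟩ := E₁
        obtain ⟨e₂, i₂⟩ := E₂
        have hcn1 := (Finset.mem_filter.mp hE₁).2
        have hcn2 := (Finset.mem_filter.mp hE₂).2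
        simp only at hf
        by_cases h01 : i₁.val = 0 <;> by_cases h02 : i₂.val = 0
        · rw [if_pos h01, if_pos h02] at hf
          have he : e₁ = e₂ := by simpa using hf
          subst he
          have : i₁ = i₂ := Fin.ext (h01.trans h02.symm)
          rw [this]
        · rw [if_pos h01, if_neg h02] at hf
          exact absurd hf (by simp)
        · rw [if_neg h01, if_pos h02] at hf
          exact absurd hf (by simp)
        · rw [if_neg h01, if_neg h02] at hf
          have he : e₁ = e₂ := by simpa using hf
          subst he
          rcases hcol_none e₁ i₁ hcn1 with ⟨h0, -⟩ | ⟨-, hke1, -⟩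
          · exact absurd h0 h01
          · rcases hcol_none e₁ i₂ hcn2 with ⟨h0, -⟩ | ⟨-, hke2, -⟩
            · exact absurd h0 h02
            · have : i₁ = i₂ := Fin.ext (hke1.trans hke2.symm)
              rw [this]
    refine le_trans hsub (le_trans (Finset.card_union_le _ _) ?_)
    have h1 := Finset.card_image_le (s := Finset.univ.filter (fun e => a e = none))
      (f := (Sum.inl : G₀.E → G₀.E ⊕ G₀.E))
    have h2 := Finset.card_image_le (s := Finset.univ.filter (fun e => b e = none))
      (f := (Sum.inr : G₀.E → G₀.E ⊕ G₀.E))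
    omega
  have hsplit := Finset.card_filter_add_card_filter_not
    (s := (Finset.univ : Finset (G₀.subdivide fst snd k).E))
    (p := fun E' => col E' = none)
  rw [Finset.card_univ] at hsplit
  have hcardE : Fintype.card (G₀.subdivide fst snd k).E
      = (∑ e : G₀.E, k e) + Fintype.card G₀.E := by
    have h : Fintype.card (G₀.subdivide fst snd k).E
        = Fintype.card (Σ e : G₀.E, Fin (k e + 1)) := Fintype.card_congr (Equiv.refl _)
    rw [h, Fintype.card_sigma]
    simp [Finset.sum_add_distrib, Finset.card_univ]
  have hcardV : Fintype.card (G₀.subdivide fst snd k).V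
      = Fintype.card G₀.V + ∑ e : G₀.E, k e := by
    have h : Fintype.card (G₀.subdivide fst snd k).V
        = Fintype.card (G₀.V ⊕ (Σ e : G₀.E, Fin (k e))) := Fintype.card_congr (Equiv.refl _)
    rw [h, Fintype.card_sum, Fintype.card_sigma]
    simp
  have hklb : 2 * Fintype.card G₀.E ≤ ∑ e : G₀.E, k e := by
    calc 2 * Fintype.card G₀.E = ∑ _e : G₀.E, 2 := by
          rw [Finset.sum_const, Finset.card_univ, smul_eq_mul, mul_comm]
      _ ≤ ∑ e : G₀.E, k e := Finset.sum_le_sum (fun e _ => hk e)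
  have hnu : H.card + H'.card ≤ (G₀.subdivide fst snd k).nu2 := by
    apply le_csSup
    · refine ⟨2 * Fintype.card (G₀.subdivide fst snd k).E, ?_⟩
      rintro m ⟨H₁, H₂, -, -, -, rfl⟩
      have b1 := Finset.card_le_univ H₁
      have b2 := Finset.card_le_univ H₂
      omega
    · exact ⟨H, H', hmatch true, hmatch false, hdisj, rfl⟩
  omega


end Multigraph
end
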